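/- arXiv:1804.04646 — 6 statements merged into one kernel-verified Lean document; each statement's English description precedes it below -/
import Mathlib

section
/- Let k and m be positive integers with k odd. Then m(m−1)/2 divides S_k(m). -/
lemma aux_dvd (k N : ℕ) (hodd : Odd k) :
    N ∣ 2 * ∑ j ∈ Finset.range (N + 1), j ^ k := by
  rcases Nat.eq_zero_or_pos N with h0 | hN
  · subst h0
    simp [Nat.zero_pow hodd.pos]
  haveI : NeZero N := ⟨hN.ne'⟩
  rw [← ZMod.natCast_eq_zero_iff]
  push_cast
  have hrefl := Finset.sum_range_reflect (fun j => ((j : ZMod N)) ^ k) (N + 1)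
  simp only [Nat.add_sub_cancel] at hrefl
  have hneg : ∀ j ∈ Finset.range (N + 1), ((N - j : ℕ) : ZMod N) ^ k
      = -((j : ZMod N) ^ k) := by
    intro j hj
    simp only [Finset.mem_range] at hj
    have hle : j ≤ N := by omega
    have : ((N - j : ℕ) : ZMod N) = -(j : ZMod N) := by
      rw [Nat.cast_sub hle, ZMod.natCast_self]; ring
    rw [this, Odd.neg_pow hodd]
  rw [Finset.sum_congr rfl hneg, Finset.sum_neg_distrib] at hrefl
  linear_combination -hrefl

/-- `S k m = 1^k + 2^k + ⋯ + (m-1)^k`, the sum of the k-th powers of the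
first `m - 1` positive integers. -/
def S (k m : ℕ) : ℕ := ∑ j ∈ Finset.Ico 1 m, j ^ k

theorem stmt_3 (k m : ℕ) (hk : 0 < k) (hm : 0 < m) (hodd : Odd k) :
    m * (m - 1) / 2 ∣ S k m := by
  have hSrange : S k m = ∑ j ∈ Finset.range m, j ^ k := by
    rw [S, Finset.range_eq_Ico, Finset.sum_eq_sum_Ico_succ_bot hm]
    simp [Nat.zero_pow hk]
  -- (m-1) ∣ 2 * S k m
  have hdm1 : (m - 1) ∣ 2 * S k m := by
    have := aux_dvd k (m - 1) hodd
    rwa [Nat.sub_add_cancel hm, ← hSrange] at this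
  -- m ∣ 2 * S k m
  have hdm : m ∣ 2 * S k m := by
    have h1 := aux_dvd k m hodd
    rw [Finset.sum_range_succ, ← hSrange, Nat.mul_add] at h1
    have h2 : m ∣ 2 * m ^ k := Dvd.dvd.mul_left (dvd_pow_self m hk.ne') 2
    exact (Nat.dvd_add_right h2).mp (by rwa [Nat.add_comm] at h1)
  have hcop : Nat.Coprime m (m - 1) := by
    have h : m - 1 + 1 = m := by omega
    rw [← h]; simp
  have hmul : m * (m - 1) ∣ 2 * S k m := hcop.mul_dvd_of_dvd_of_dvd hdm hdm1
  have heven : 2 ∣ m * (m - 1) := by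
    rcases Nat.even_or_odd m with h | h
    · exact Dvd.dvd.mul_right h.two_dvd _
    · exact Dvd.dvd.mul_left ((Nat.Odd.sub_odd h odd_one).two_dvd) _
  have h2q : 2 * (m * (m - 1) / 2) = m * (m - 1) := Nat.mul_div_cancel' heven
  have : 2 * (m * (m - 1) / 2) ∣ 2 * S k m := by rwa [h2q]
  exact (Nat.mul_dvd_mul_iff_left (by norm_num : 0 < 2)).mp this
end

section
/- Let k and m be positive integers with k even. Then S_k(m) ≡ −Σ_{p prime, p | m, (p−1) | k} (m/p) (mod m). -/
open Finset

lemma bin2 (a c : ℤ) (k : ℕ) : ∃ t, (a + c) ^ (k+1) = a^(k+1) + (k+1) * a^k * c + c^2 * t := by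
  induction k with
  | zero => exact ⟨0, by ring⟩
  | succ k ih =>
    obtain ⟨t, ht⟩ := ih
    refine ⟨(k+1) * a^k + t * a + t * c, ?_⟩
    have : (a + c)^(k+2) = (a + c)^(k+1) * (a + c) := by ring
    rw [this, ht]; push_cast; ring

lemma split_sum (f : ℕ → ℤ) (q n : ℕ) :
    ∑ j ∈ range (q * n), f j = ∑ b ∈ range q, ∑ a ∈ range n, f (n * b + a) := by
  induction q with
  | zero => simp
  | succ q ih =>
    rw [Finset.sum_range_succ, ← ih, Nat.succ_mul,
      ← Finset.sum_range_add_sum_Ico f (Nat.le_add_right (q*n) n),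
      Finset.sum_Ico_eq_sum_range]
    simp [mul_comm q n]

lemma modeq_sum {α : Type*} (s : Finset α) (f g : α → ℤ) (n : ℤ)
    (h : ∀ i ∈ s, f i ≡ g i [ZMOD n]) : ∑ i ∈ s, f i ≡ ∑ i ∈ s, g i [ZMOD n] := by
  rw [Int.modEq_iff_dvd, ← Finset.sum_sub_distrib]
  exact Finset.dvd_sum fun i hi => (Int.modEq_iff_dvd.mp (h i hi))

-- L4: repetition mod n
lemma repeat_sum (k q n : ℕ) :
    (∑ j ∈ range (q * n), (j:ℤ)^k) ≡ q * ∑ j ∈ range n, (j:ℤ)^k [ZMOD (n:ℤ)] := by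
  rw [split_sum (fun j => (j:ℤ)^k) q n]
  have : (q : ℤ) * ∑ j ∈ range n, (j:ℤ)^k = ∑ _b ∈ range q, ∑ a ∈ range n, (a:ℤ)^k := by
    rw [Finset.sum_const, card_range, nsmul_eq_mul]
  rw [this]
  refine modeq_sum _ _ _ _ fun b _ => modeq_sum _ _ _ _ fun a _ => ?_
  have : ((n * b + a : ℕ) : ℤ) ≡ (a : ℤ) [ZMOD (n:ℤ)] := by
    push_cast
    exact (Int.modEq_iff_dvd.mpr ⟨-b, by ring⟩)
  exact this.pow k

lemma sum_univ_zmod (p : ℕ) [NeZero p] {M : Type*} [AddCommMonoid M] (f : ZMod p → M) :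
    ∑ x : ZMod p, f x = ∑ j ∈ range p, f j := by
  refine Finset.sum_bij' (fun x _ => ZMod.val x) (fun j _ => (j : ZMod p)) ?_ ?_ ?_ ?_ ?_
  · intro a _; exact Finset.mem_range.mpr (ZMod.val_lt a)
  · intro a _; exact Finset.mem_univ _
  · intro a _; simp [ZMod.natCast_val, ZMod.cast_id]
  · intro j hj; exact ZMod.val_cast_of_lt (Finset.mem_range.mp hj)
  · intro a _; simp [ZMod.natCast_val, ZMod.cast_id]

-- L2: mod p
lemma mod_p_sum (p k : ℕ) (hp : p.Prime) (hk : 0 < k) :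
    (∑ j ∈ range p, (j:ℤ)^k) ≡ (if (p-1) ∣ k then -1 else 0) [ZMOD (p:ℤ)] := by
  haveI := Fact.mk hp
  have key : ∑ x : ZMod p, x^k = if (p-1) ∣ k then -1 else 0 := by
    classical
    have h0 : ∑ x : ZMod p, x^k = ∑ x ∈ (Finset.univ : Finset (ZMod p)) \ {0}, x^k := by
      rw [← Finset.sum_sdiff ({0} : Finset (ZMod p)).subset_univ, Finset.sum_singleton,
        zero_pow hk.ne', add_zero]
    have h1 : ∑ x ∈ (Finset.univ : Finset (ZMod p)) \ {0}, x^k = ∑ x : (ZMod p)ˣ, ((x:ZMod p))^k := by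
      refine (Finset.sum_bij (fun (x : (ZMod p)ˣ) _ => (x : ZMod p)) ?_ ?_ ?_ ?_).symm
      · intro x _; simp [Units.ne_zero]
      · intro a _ b _ h; exact Units.ext h
      · intro b hb
        simp only [mem_sdiff, mem_univ, true_and, mem_singleton] at hb
        exact ⟨Units.mk0 b hb, Finset.mem_univ _, rfl⟩
      · intro x _; rfl
    rw [h0, h1]
    have := FiniteField.sum_pow_units (ZMod p) k
    rwa [ZMod.card p] at this
  have : ((∑ j ∈ range p, (j:ℤ)^k : ℤ) : ZMod p)
      = ((if (p-1) ∣ k then (-1:ℤ) else 0) : ZMod p) := by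
    push_cast
    rw [← key]
    · rcases Nat.eq_zero_or_pos p with h | h
      · exact absurd h hp.pos.ne'
      · exact (sum_univ_zmod p (fun x => x^k)).symm
  exact (ZMod.intCast_eq_intCast_iff _ _ _).mp (by simpa using this)

-- L5: prime power lifting
lemma prime_pow_sum (p k : ℕ) (hp : p.Prime) (hk : 0 < k) (heven : Even k) :
    ∀ e, 1 ≤ e → (∑ j ∈ range (p^e), (j:ℤ)^k) ≡
      (p:ℤ)^(e-1) * ∑ j ∈ range p, (j:ℤ)^k [ZMOD ((p:ℤ)^e)] := by
  have hpB : (p:ℤ) ∣ (k:ℤ) * ∑ b ∈ range p, (b:ℤ) := by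
    rcases eq_or_ne p 2 with rfl | hp2
    · obtain ⟨c, rfl⟩ := heven
      exact Dvd.dvd.mul_right (by push_cast; exact ⟨c, by ring⟩) _
    · have hB2 : (∑ b ∈ range p, (b:ℤ)) * 2 = p * (p - 1) := by
        have hnat := congrArg (Nat.cast : ℕ → ℤ) (Finset.sum_range_id_mul_two p)
        push_cast [Nat.cast_sub hp.pos] at hnat
        exact hnat
      have hpd : (p:ℤ) ∣ (∑ b ∈ range p, (b:ℤ)) * 2 := hB2 ▸ Dvd.intro _ rfl
      have hodd : ¬ ((p:ℤ) ∣ 2) := by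
        intro h
        have h' : p ∣ 2 := Int.ofNat_dvd.mp (by exact_mod_cast h)
        exact hp2 ((Nat.prime_dvd_prime_iff_eq hp Nat.prime_two).mp h')
      have hprime : Prime (p:ℤ) := Nat.prime_iff_prime_int.mp hp
      exact Dvd.dvd.mul_left (((hprime.dvd_mul).mp hpd).resolve_right hodd) _
  intro e he
  induction e, he using Nat.le_induction with
  | base => simpa using Int.ModEq.refl _
  | succ e he ih =>
    obtain ⟨k', hkk⟩ : ∃ k', k = k' + 1 := ⟨k-1, (Nat.succ_pred_eq_of_pos hk).symm⟩
    subst hkk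
    set A := ∑ a ∈ range (p^e), (a:ℤ)^k' with hA
    set SS := ∑ a ∈ range (p^e), (a:ℤ)^(k'+1) with hSS
    set B := ∑ b ∈ range p, (b:ℤ) with hB
    have step : (∑ j ∈ range (p^(e+1)), (j:ℤ)^(k'+1)) ≡
        (p:ℤ) * SS [ZMOD ((p:ℤ)^(e+1))] := by
      have hsplit : p^(e+1) = p * p^e := by ring
      rw [hsplit, split_sum]
      have hterm : ∀ b ∈ range p, ∀ a ∈ range (p^e),
          (((p^e * b + a : ℕ)):ℤ)^(k'+1) ≡
            (a:ℤ)^(k'+1) + (a:ℤ)^k' * (((k'+1:ℕ):ℤ) * ((p:ℤ)^e * b))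
            [ZMOD ((p:ℤ)^(e+1))] := by
        intro b _ a _
        obtain ⟨t, ht⟩ := bin2 (a:ℤ) ((p:ℤ)^e * (b:ℤ)) k'
        have hL : (((p^e * b + a : ℕ)):ℤ)^(k'+1) = ((a:ℤ) + (p:ℤ)^e * b)^(k'+1) := by
          push_cast; ring
        rw [hL, ht]
        have hdd : ((p:ℤ)^(e+1)) ∣ ((p:ℤ)^e * (b:ℤ))^2 * t := by
          have h2 : ((p:ℤ)^e * (b:ℤ))^2 * t = (p:ℤ)^(2*e) * ((b:ℤ)^2*t) := by ring
          rw [h2]; exact Dvd.dvd.mul_right (pow_dvd_pow _ (by omega)) _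
        refine Int.modEq_iff_dvd.mpr ?_
        have h3 : ((a:ℤ)^(k'+1) + (a:ℤ)^k' * (((k'+1:ℕ):ℤ) * ((p:ℤ)^e * b)))
            - ((a:ℤ)^(k'+1) + ((k':ℤ)+1) * (a:ℤ)^k' * ((p:ℤ)^e * b) + ((p:ℤ)^e * (b:ℤ))^2 * t)
            = -(((p:ℤ)^e * (b:ℤ))^2 * t) := by push_cast; ring
        rw [h3]
        exact dvd_neg.mpr hdd
      refine Int.ModEq.trans (modeq_sum _ _ _ _ fun b hb =>
        modeq_sum _ _ _ _ fun a ha => hterm b hb a ha) ?_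
      have hEq : ∑ b ∈ range p, ∑ a ∈ range (p^e),
          ((a:ℤ)^(k'+1) + (a:ℤ)^k' * (((k'+1:ℕ):ℤ) * ((p:ℤ)^e * b)))
          = (p:ℤ) * SS + A * (((k'+1:ℕ):ℤ) * ((p:ℤ)^e * B)) := by
        have inner : ∀ b : ℕ, ∑ a ∈ range (p^e),
            ((a:ℤ)^(k'+1) + (a:ℤ)^k' * (((k'+1:ℕ):ℤ) * ((p:ℤ)^e * b)))
            = SS + A * (((k'+1:ℕ):ℤ) * ((p:ℤ)^e * b)) := by
          intro b
          rw [Finset.sum_add_distrib, ← Finset.sum_mul]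
        rw [Finset.sum_congr rfl fun b _ => inner b, Finset.sum_add_distrib,
          Finset.sum_const, card_range, nsmul_eq_mul, ← Finset.mul_sum, ← Finset.mul_sum,
          ← Finset.mul_sum]
      rw [hEq]
      have hdvd : ((p:ℤ)^(e+1)) ∣ A * (((k'+1:ℕ):ℤ) * ((p:ℤ)^e * B)) := by
        have h1 : (p:ℤ)^(e+1) = (p:ℤ)^e * (p:ℤ) := by ring
        have h2 : A * (((k'+1:ℕ):ℤ) * ((p:ℤ)^e * B)) = (p:ℤ)^e * ((((k'+1:ℕ):ℤ)) * B) * A := by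
          ring
        rw [h1, h2]
        exact Dvd.dvd.mul_right (mul_dvd_mul_left _ hpB) _
      calc (p:ℤ) * SS + A * (((k'+1:ℕ):ℤ) * ((p:ℤ)^e * B))
          ≡ (p:ℤ) * SS + 0 [ZMOD ((p:ℤ)^(e+1))] :=
            Int.ModEq.add_left _ (Int.modEq_zero_iff_dvd.mpr hdvd)
        _ = (p:ℤ) * SS := by ring
    refine step.trans ?_
    have := ih.mul_left' (c := (p:ℤ))
    have hmod : (p:ℤ) * (p:ℤ)^e = (p:ℤ)^(e+1) := by ring
    have hrhs : (p:ℤ) * ((p:ℤ)^(e-1) * ∑ j ∈ range p, (j:ℤ)^(k'+1))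
        = (p:ℤ)^(e+1-1) * ∑ j ∈ range p, (j:ℤ)^(k'+1) := by
      rw [← mul_assoc, ← pow_succ']
      congr 2
      omega
    rw [hmod, hrhs] at this
    exact this

-- cast of S as full range sum
lemma S_cast (k m : ℕ) (hk : 0 < k) : (S k m : ℤ) = ∑ j ∈ range m, (j:ℤ)^k := by
  rcases Nat.eq_zero_or_pos m with rfl | hm
  · simp [S]
  · rw [S, Finset.range_eq_Ico, Finset.sum_eq_sum_Ico_succ_bot hm]
    push_cast
    rw [zero_pow hk.ne', zero_add]

-- per prime congruence
lemma per_prime (k m p : ℕ) (hk : 0 < k) (hm : 0 < m) (heven : Even k)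
    (hpm : p ∈ m.primeFactors) :
    ((S k m : ℤ)) ≡
      -∑ q ∈ m.primeFactors.filter (fun q => (q - 1) ∣ k), ((m / q : ℕ) : ℤ)
      [ZMOD ((p:ℤ)^(m.factorization p))] := by
  have hp : p.Prime := Nat.prime_of_mem_primeFactors hpm
  have hpdvd : p ∣ m := Nat.dvd_of_mem_primeFactors hpm
  set e := m.factorization p with he
  have he1 : 1 ≤ e := (Nat.Prime.factorization_pos_of_dvd hp hm.ne' hpdvd)
  set n := m / p^e with hn
  have hmn : p^e * n = m := Nat.ordProj_mul_ordCompl_eq_self m p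
  have hpn : ¬ p ∣ n := Nat.not_dvd_ordCompl hp hm.ne'
  have hmp : m / p = p^(e-1) * n := by
    have : m = p * (p^(e-1) * n) := by
      rw [← hmn, ← mul_assoc, ← pow_succ']
      congr 2
      omega
    rw [this, Nat.mul_div_cancel_left _ hp.pos]
  set ε : ℤ := if (p-1) ∣ k then -1 else 0 with hε
  -- LHS
  have hL : ((S k m : ℤ)) ≡ ((m/p : ℕ):ℤ) * ε [ZMOD ((p:ℤ)^e)] := by
    rw [S_cast k m hk]
    have h1 : (∑ j ∈ range m, (j:ℤ)^k) ≡ (n:ℤ) * ∑ j ∈ range (p^e), (j:ℤ)^k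
        [ZMOD ((p:ℤ)^e)] := by
      have := repeat_sum k n (p^e)
      rw [mul_comm (p^e) n] at hmn
      rw [hmn] at this
      exact_mod_cast this
    have h2 := (prime_pow_sum p k hp hk heven e he1).mul_left (n:ℤ)
    have h3 : ((p:ℤ)^(e-1) * ∑ j ∈ range p, (j:ℤ)^k) ≡ (p:ℤ)^(e-1) * ε
        [ZMOD ((p:ℤ)^e)] := by
      have := (mod_p_sum p k hp hk).mul_left' (c := (p:ℤ)^(e-1))
      have hpe : (p:ℤ)^(e-1) * (p:ℤ) = (p:ℤ)^e := by
        rw [← pow_succ]; congr 1; omega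
      rwa [hpe] at this
    have h4 := h3.mul_left (n:ℤ)
    have h5 : (n:ℤ) * ((p:ℤ)^(e-1) * ε) = ((m/p : ℕ):ℤ) * ε := by
      rw [hmp]; push_cast; ring
    rw [h5] at h4
    exact (h1.trans h2).trans h4
  refine hL.trans ?_
  -- RHS
  have hq0 : ∀ q ∈ (m.primeFactors.filter (fun q => (q - 1) ∣ k)).erase p,
      ((m / q : ℕ) : ℤ) ≡ 0 [ZMOD ((p:ℤ)^e)] := by
    intro q hq
    obtain ⟨hqp, hqF⟩ := Finset.mem_erase.mp hq
    obtain ⟨hqpf, -⟩ := Finset.mem_filter.mp hqF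
    have hq' : q.Prime := Nat.prime_of_mem_primeFactors hqpf
    have hqm : q ∣ m := Nat.dvd_of_mem_primeFactors hqpf
    have hcop : Nat.Coprime q (p^e) :=
      ((Nat.coprime_primes hq' hp).mpr hqp).pow_right e
    have hqn : q ∣ n := by
      have : q ∣ p^e * n := hmn ▸ hqm
      exact (Nat.Coprime.dvd_of_dvd_mul_left hcop this)
    have : (p:ℤ)^e ∣ ((m / q : ℕ) : ℤ) := by
      have hmq : m / q = p^e * (n / q) := by
        rw [← hmn, Nat.mul_div_assoc _ hqn]
      rw [hmq]; push_cast
      exact Dvd.intro _ rfl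
    exact (Int.modEq_zero_iff_dvd.mpr this).symm.symm
  by_cases hpF : p ∈ m.primeFactors.filter (fun q => (q - 1) ∣ k)
  · have hdvdk : (p-1) ∣ k := (Finset.mem_filter.mp hpF).2
    rw [← Finset.add_sum_erase _ _ hpF]
    have hsum : (∑ q ∈ (m.primeFactors.filter (fun q => (q - 1) ∣ k)).erase p,
        ((m / q : ℕ) : ℤ)) ≡ ∑ q ∈ (m.primeFactors.filter (fun q => (q - 1) ∣ k)).erase p,
        (0:ℤ) [ZMOD ((p:ℤ)^e)] := modeq_sum _ _ _ _ hq0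
    rw [Finset.sum_const_zero] at hsum
    have : ((m/p : ℕ):ℤ) * ε = -((m/p : ℕ):ℤ) := by rw [hε, if_pos hdvdk]; ring
    rw [this]
    have := (Int.ModEq.add_left ((m/p : ℕ):ℤ) hsum).neg
    simpa using this.symm
  · have hdvdk : ¬ (p-1) ∣ k := by
      intro h
      exact hpF (Finset.mem_filter.mpr ⟨hpm, h⟩)
    have hsum : (∑ q ∈ m.primeFactors.filter (fun q => (q - 1) ∣ k),
        ((m / q : ℕ) : ℤ)) ≡ ∑ q ∈ m.primeFactors.filter (fun q => (q - 1) ∣ k),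
        (0:ℤ) [ZMOD ((p:ℤ)^e)] := by
      refine modeq_sum _ _ _ _ fun q hq => hq0 q ?_
      exact Finset.mem_erase.mpr ⟨fun h => hpF (h ▸ hq), hq⟩
    rw [Finset.sum_const_zero] at hsum
    have : ((m/p : ℕ):ℤ) * ε = 0 := by rw [hε, if_neg hdvdk]; ring
    rw [this]
    simpa using hsum.neg.symm


theorem stmt_4 (k m : ℕ) (hk : 0 < k) (hm : 0 < m) (heven : Even k) :
    (S k m : ℤ) ≡
      -∑ p ∈ m.primeFactors.filter (fun p => (p - 1) ∣ k), ((m / p : ℕ) : ℤ)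
      [ZMOD (m : ℤ)] := by
  rw [Int.modEq_iff_dvd]
  have hmprod : (m:ℤ) = ∏ p ∈ m.primeFactors, (p:ℤ)^(m.factorization p) := by
    conv_lhs => rw [← Nat.factorization_prod_pow_eq_self hm.ne']
    rw [Nat.prod_factorization_eq_prod_primeFactors]
    push_cast
    rfl
  rw [hmprod]
  refine Finset.prod_dvd_of_coprime ?_ ?_
  · intro p hp q hq hpq
    have hp' := Nat.prime_of_mem_primeFactors (by exact hp)
    have hq' := Nat.prime_of_mem_primeFactors (by exact hq)
    have : IsCoprime (p:ℤ) (q:ℤ) :=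
      Nat.isCoprime_iff_coprime.mpr ((Nat.coprime_primes hp' hq').mpr hpq)
    exact (this.pow : IsCoprime _ _)
  · intro p hp
    exact Int.ModEq.dvd (per_prime k m p hk hm heven hp)
end

section
/- Let k and m be positive integers with k even. Then T_k(m) = 2^k · Σ_{j=0}^{k} C(k,j) B_{k−j} · (2m+1)^{j+1} / (2^{j+1} (j+1)), as an identity of rational numbers. -/
section Aux
open Polynomial Finset

lemma bernoulli_comp_one_sub (n : ℕ) :
    (Polynomial.bernoulli n).comp (1 - X) = (-1 : ℚ) ^ n • Polynomial.bernoulli n := by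
  induction n with
  | zero => simp
  | succ n ih =>
    have hderiv : Polynomial.derivative ((Polynomial.bernoulli (n+1)).comp (1 - X)
        - (-1 : ℚ) ^ (n+1) • Polynomial.bernoulli (n+1)) = 0 := by
      rw [derivative_sub, derivative_comp, derivative_bernoulli_add_one,
        derivative_smul, derivative_bernoulli_add_one]
      simp only [derivative_sub, derivative_one, derivative_X, zero_sub,
        mul_comp, natCast_comp, add_comp, one_comp]
      rw [ih]
      ring_nf
      simp [smul_smul, mul_comm]
      abel
    have hC := Polynomial.eq_C_of_derivative_eq_zero hderiv
    have h0 : ((Polynomial.bernoulli (n+1)).comp (1 - X)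
        - (-1 : ℚ) ^ (n+1) • Polynomial.bernoulli (n+1)).eval 0 = 0 := by
      simp only [eval_sub, eval_comp, eval_sub, eval_one, eval_X, sub_zero,
        eval_smul, smul_eq_mul]
      rw [Polynomial.bernoulli_eval_one, Polynomial.bernoulli_eval_zero,
        bernoulli'_eq_bernoulli]
      ring
    rw [hC] at h0
    simp only [eval_C] at h0
    rw [h0, map_zero] at hC
    exact sub_eq_zero.mp hC

lemma bernoulli_eval_half_zero (k : ℕ) (heven : Even k) :
    (Polynomial.bernoulli (k+1)).eval (1/2 : ℚ) = 0 := by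
  have := congrArg (Polynomial.eval (1/2 : ℚ)) (bernoulli_comp_one_sub (k+1))
  simp only [eval_comp, eval_sub, eval_one, eval_X, eval_smul, smul_eq_mul] at this
  norm_num at this
  rw [pow_succ, heven.neg_one_pow, one_mul] at this
  linarith

lemma bernoulli_telescope (k m : ℕ) :
    (Polynomial.bernoulli (k+1)).eval ((m : ℚ) + 1/2) =
      (Polynomial.bernoulli (k+1)).eval (1/2 : ℚ)
        + ((k : ℚ) + 1) * ∑ j ∈ Finset.range m, ((j : ℚ) + 1/2) ^ k := by
  induction m with
  | zero => simp
  | succ m ih =>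
    have h := Polynomial.bernoulli_eval_one_add (k+1) ((m : ℚ) + 1/2)
    push_cast
    rw [show ((m : ℚ) + 1 + 1/2) = 1 + ((m : ℚ) + 1/2) by ring, h, ih,
      Finset.sum_range_succ]
    push_cast
    ring

lemma bernoulli_eval_expand (k : ℕ) (y : ℚ) :
    (Polynomial.bernoulli (k+1)).eval y =
      _root_.bernoulli (k+1) + ∑ j ∈ Finset.range (k+1),
        (((k+1).choose (j+1) : ℕ) : ℚ) * _root_.bernoulli (k - j) * y ^ (j+1) := by
  rw [Polynomial.bernoulli_def, Polynomial.eval_finset_sum]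
  simp only [Polynomial.eval_monomial]
  rw [Finset.sum_range_succ']
  simp only [Nat.choose_zero_right, Nat.cast_one, mul_one, pow_zero, Nat.sub_zero]
  rw [add_comm]
  congr 1
  refine Finset.sum_congr rfl fun j hj => ?_
  have : k + 1 - (j + 1) = k - j := by omega
  rw [this]
  ring
end Aux

/-- `T k m = 1^k + 3^k + ⋯ + (2m-1)^k`, the sum of the k-th powers of the
first `m` odd positive integers. -/
def T (k m : ℕ) : ℕ := ∑ j ∈ Finset.range m, (2 * j + 1) ^ k

theorem stmt_9 (k m : ℕ) (hk : 0 < k) (hm : 0 < m) (heven : Even k) :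
    (T k m : ℚ) =
      2 ^ k * ∑ j ∈ Finset.range (k + 1),
        (k.choose j : ℚ) * bernoulli (k - j) * (2 * m + 1) ^ (j + 1) /
          (2 ^ (j + 1) * (j + 1)) := by
  have hk1 : ((k : ℚ) + 1) ≠ 0 := by positivity
  set x : ℚ := ((2 * m + 1 : ℚ)) / 2 with hx
  -- bernoulli (k+1) = 0
  have hBzero : _root_.bernoulli (k + 1) = 0 := by
    rw [bernoulli_eq_bernoulli'_of_ne_one (by omega)]
    exact bernoulli'_eq_zero_of_odd (heven.add_one) (by omega)
  -- LHS
  have h1 : ((k : ℚ) + 1) * (T k m : ℚ)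
      = 2 ^ k * (Polynomial.bernoulli (k+1)).eval x := by
    have hxm : x = (m : ℚ) + 1/2 := by rw [hx]; push_cast; ring
    rw [hxm, bernoulli_telescope, bernoulli_eval_half_zero k heven, zero_add]
    rw [T]
    push_cast
    rw [Finset.mul_sum, Finset.mul_sum, Finset.mul_sum]
    refine Finset.sum_congr rfl fun j _ => ?_
    rw [show (2 * (j:ℚ) + 1) = 2 * ((j:ℚ) + 1/2) by ring, mul_pow]
    ring
  -- RHS
  have h2 : ((k : ℚ) + 1) * (2 ^ k * ∑ j ∈ Finset.range (k + 1),
        (k.choose j : ℚ) * bernoulli (k - j) * (2 * m + 1) ^ (j + 1) /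
          (2 ^ (j + 1) * (j + 1)))
      = 2 ^ k * (Polynomial.bernoulli (k+1)).eval x := by
    rw [bernoulli_eval_expand, hBzero, zero_add, ← mul_assoc,
      mul_comm ((k:ℚ)+1) (2^k : ℚ), mul_assoc, Finset.mul_sum]
    congr 1
    refine Finset.sum_congr rfl fun j _ => ?_
    have hchoose : ((k+1 : ℕ) : ℚ) * (k.choose j : ℚ)
        = (((k+1).choose (j+1) : ℕ) : ℚ) * ((j+1 : ℕ) : ℚ) := by
      exact_mod_cast congrArg (Nat.cast : ℕ → ℚ) (Nat.add_one_mul_choose_eq k j)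
    have hxp : x ^ (j+1) = (2 * (m:ℚ) + 1) ^ (j+1) / 2 ^ (j+1) := by
      rw [hx, div_pow]
    push_cast at hchoose ⊢
    rw [hxp]
    have h2j : (2 : ℚ) ^ (j+1) ≠ 0 := by positivity
    have hj1 : ((j : ℚ) + 1) ≠ 0 := by positivity
    field_simp
    linear_combination bernoulli (k - j) * hchoose
  have := h1.trans h2.symm
  exact mul_left_cancel₀ hk1 this
end

section
/- Let k and m be positive integers with k even. Then (2m+1)^2 divides T_k(m) if and only if (2m+1) divides U_k. -/
open Finset


/-- `q` is `p`-integral: `p` does not divide its denominator. -/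
def PIn (p : ℕ) (q : ℚ) : Prop := ¬ p ∣ q.den

lemma PIn_int (p : ℕ) (hp : 2 ≤ p) (z : ℤ) : PIn p (z : ℚ) := by
  simp [PIn, Rat.den_intCast]; omega

lemma PIn_nat (p : ℕ) (hp : 2 ≤ p) (z : ℕ) : PIn p (z : ℚ) := by
  simpa using PIn_int p hp (z : ℤ)

lemma PIn_add {p : ℕ} (hp : p.Prime) {a b : ℚ} (ha : PIn p a) (hb : PIn p b) :
    PIn p (a + b) := by
  intro h
  rcases (Nat.Prime.dvd_mul hp).1 (h.trans (Rat.add_den_dvd a b)) with h' | h'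
  exacts [ha h', hb h']

lemma PIn_mul {p : ℕ} (hp : p.Prime) {a b : ℚ} (ha : PIn p a) (hb : PIn p b) :
    PIn p (a * b) := by
  intro h
  rcases (Nat.Prime.dvd_mul hp).1 (h.trans (Rat.mul_den_dvd a b)) with h' | h'
  exacts [ha h', hb h']

lemma PIn_neg {p : ℕ} {a : ℚ} (ha : PIn p a) : PIn p (-a) := by
  simpa [PIn] using ha

lemma PIn_zero (p : ℕ) (hp : 2 ≤ p) : PIn p (0 : ℚ) := by
  simpa using PIn_int p hp 0

lemma PIn_sum {p : ℕ} (hp : p.Prime) {s : Finset ℕ} {f : ℕ → ℚ}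
    (h : ∀ i ∈ s, PIn p (f i)) : PIn p (∑ i ∈ s, f i) := by
  classical
  induction s using Finset.induction_on with
  | empty => simpa using PIn_zero p hp.two_le
  | @insert a s' hx ih =>
    rw [Finset.sum_insert hx]
    exact PIn_add hp (h a (Finset.mem_insert_self a s'))
      (ih fun i hi => h i (Finset.mem_insert_of_mem hi))

lemma PIn_div_int {p : ℕ} (hp : p.Prime) (a b : ℤ) (hb : ¬ (p : ℤ) ∣ b) :
    PIn p ((a : ℚ) / (b : ℚ)) := by
  intro h
  rw [← Rat.divInt_eq_div] at h
  have hd : ((Rat.divInt a b).den : ℤ) ∣ b := Rat.den_dvd a b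
  exact hb (dvd_trans (Int.natCast_dvd_natCast.2 h) hd)

/-- key: `w / t` is `p`-integral provided `p ^ (v_p t) ∣ w`. -/
lemma PIn_nat_div {p : ℕ} (hp : p.Prime) (w t : ℕ) (ht : t ≠ 0)
    (h : p ^ (t.factorization p) ∣ w) : PIn p ((w : ℚ) / (t : ℚ)) := by
  set e := t.factorization p with he
  obtain ⟨w', hw'⟩ := h
  have hts : p ^ e * (t / p ^ e) = t := Nat.ordProj_mul_ordCompl_eq_self t p
  have hpq : ((p:ℚ)) ≠ 0 := by exact_mod_cast hp.ne_zero
  have hpe : ((p:ℚ) ^ e) ≠ 0 := pow_ne_zero _ hpq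
  have ht' : ¬ p ∣ (t / p ^ e) := Nat.not_dvd_ordCompl hp ht
  have key : (w : ℚ) / (t : ℚ) = (w' : ℚ) / ((t / p ^ e : ℕ) : ℚ) := by
    have h2 : ((t / p ^ e : ℕ) : ℚ) * (p:ℚ)^e = (t:ℚ) := by
      rw [← Nat.cast_pow, ← Nat.cast_mul, Nat.mul_comm, hts]
    have h1 : ((w:ℚ)) = ((w':ℚ)) * (p:ℚ)^e := by rw [hw']; push_cast; ring
    rw [h1, ← h2, mul_div_mul_right _ _ hpe]
  rw [key]
  rw [show ((w':ℚ)) = (((w':ℤ)):ℚ) by norm_cast,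
    show (((t / p ^ e : ℕ)):ℚ) = ((((t / p ^ e : ℕ) : ℤ)):ℚ) by norm_cast]
  exact PIn_div_int hp (w' : ℤ) ((t / p ^ e : ℕ) : ℤ) (by exact_mod_cast ht')


lemma eval_bernoulli (ν : ℕ) (y : ℚ) : (Polynomial.bernoulli ν).eval y =
    ∑ i ∈ range (ν+1), bernoulli i * (ν.choose i) * y^(ν-i) := by
  rw [Polynomial.bernoulli, Polynomial.eval_finset_sum]
  apply Finset.sum_congr rfl
  intro i _
  rw [Polynomial.eval_monomial]

lemma choose_key (j i : ℕ) : ((j+1-i : ℕ) : ℚ) * ((j+1).choose i) = (j+1) * (j.choose i) := by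
  have h1 := Nat.add_one_mul_choose_eq j i
  have h2 := Nat.choose_succ_right_eq (j+1) i
  have : (j+1-i) * ((j+1).choose i) = (j+1) * j.choose i := by
    calc (j+1-i) * (j+1).choose i = (j+1).choose i * (j+1-i) := Nat.mul_comm _ _
      _ = (j+1).choose (i+1) * (i+1) := h2.symm
      _ = (j+1) * j.choose i := by rw [← h1]
  exact_mod_cast congrArg (Nat.cast : ℕ → ℚ) this

lemma faul (j N : ℕ) : (N:ℚ) * bernoulli j = (∑ i ∈ range N, (i:ℚ)^j) -
    ∑ i ∈ range j, bernoulli i * (j.choose i) * (N:ℚ)^(j+1-i) / ((j+1-i : ℕ) : ℚ) := by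
  have h := Polynomial.bernoulli_succ_eval N j
  rw [eval_bernoulli] at h
  rw [Finset.sum_range_succ, Finset.sum_range_succ] at h
  have e1 : (j+1) - j = 1 := by omega
  have e2 : (j+1) - (j+1) = 0 := by omega
  rw [e1, e2, pow_one, pow_zero, Nat.choose_self, Nat.choose_succ_self_right] at h
  have hsum : (j+1:ℚ) * (∑ i ∈ range j, bernoulli i * (j.choose i) * (N:ℚ)^(j+1-i) / ((j+1-i : ℕ) : ℚ))
      = ∑ i ∈ range j, bernoulli i * ((j+1).choose i) * (N:ℚ)^(j+1-i) := by
    rw [Finset.mul_sum]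
    apply Finset.sum_congr rfl
    intro i hi
    have hij : i < j := Finset.mem_range.1 hi
    have hne : ((j+1-i : ℕ) : ℚ) ≠ 0 := by
      have : 0 < j+1-i := by omega
      exact_mod_cast this.ne'
    rw [eq_comm, ← sub_eq_zero]
    field_simp
    linear_combination (bernoulli i * (N:ℚ)^(j+1-i)) * choose_key j i
  have hj1 : ((j:ℚ)+1) ≠ 0 := by positivity
  have hj1' : ((j+1 : ℕ):ℚ) = (j:ℚ)+1 := by push_cast; ring
  apply mul_left_cancel₀ hj1
  rw [mul_sub, hsum]
  push_cast at h ⊢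
  linarith [h]

lemma bernoulli_odd_zero {n : ℕ} (h : Odd n) (h1 : 1 < n) : bernoulli n = 0 := by
  rw [bernoulli_eq_bernoulli'_of_ne_one (by omega)]
  exact bernoulli'_eq_zero_of_odd h h1

lemma parity {k : ℕ} (hk : Even k) (y : ℚ) :
    (Polynomial.bernoulli (k+1)).eval (-y) + (Polynomial.bernoulli (k+1)).eval y
      = -((k:ℚ)+1) * y^k := by
  rw [eval_bernoulli, eval_bernoulli, ← Finset.sum_add_distrib]
  have : ∀ i ∈ range (k+2), (bernoulli i * ((k+1).choose i) * (-y)^(k+1-i)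
      + bernoulli i * ((k+1).choose i) * y^(k+1-i))
      = if i = 1 then -((k:ℚ)+1) * y^k else 0 := by
    intro i hi
    rcases Nat.even_or_odd i with hie | hio
    · have h1 : i ≠ 1 := by rintro rfl; have := Nat.even_iff.1 hie; norm_num at this
      have hodd : Odd (k+1-i) := by
        obtain ⟨a, ha⟩ := hk; obtain ⟨b, hb⟩ := hie
        have hile : i ≤ k+1 := by have := Finset.mem_range.1 hi; omega
        refine Nat.odd_iff.2 ?_
        omega
      rw [hodd.neg_pow, if_neg h1]; ring
    · by_cases h1 : i = 1
      · subst h1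
        have he : k+1-1 = k := by omega
        rw [if_pos rfl, he, hk.neg_pow, bernoulli_one, Nat.choose_one_right]
        push_cast; ring
      · have : bernoulli i = 0 := bernoulli_odd_zero hio (by rcases hio with ⟨c, hc⟩; omega)
        rw [this, if_neg h1]; ring
  rw [Finset.sum_congr rfl this, Finset.sum_ite_eq' (range (k+2)) 1]
  rw [if_pos (by simp)]

lemma eval_half {k : ℕ} (hk : Even k) (hk0 : 0 < k) :
    (Polynomial.bernoulli (k+1)).eval (1/2 : ℚ) = 0 := by
  have h1 := Polynomial.bernoulli_eval_one_add (k+1) (-(1/2) : ℚ)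
  have h2 := parity hk (1/2 : ℚ)
  have e : (1 : ℚ) + -(1/2) = 1/2 := by norm_num
  rw [e] at h1
  have e2 : (k+1) - 1 = k := by omega
  rw [e2, hk.neg_pow] at h1
  push_cast at h1 h2 ⊢
  linarith

lemma master {k : ℕ} (hk : Even k) (hk0 : 0 < k) (m : ℕ) :
    2 * ((k:ℚ)+1) * (T k m : ℚ) =
      2^(k+1) * (Polynomial.bernoulli (k+1)).eval (((2*m+1 : ℕ) : ℚ)/2) := by
  induction m with
  | zero =>
    have : ((2*0+1 : ℕ) : ℚ)/2 = 1/2 := by norm_num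
    rw [this, eval_half hk hk0]
    simp [T]
  | succ m ih =>
    have hT : (T k (m+1) : ℚ) = (T k m : ℚ) + ((2*m+1 : ℕ) : ℚ)^k := by
      rw [T, T, Finset.sum_range_succ]
      push_cast
      ring
    have harg : ((2*(m+1)+1 : ℕ) : ℚ)/2 = 1 + ((2*m+1 : ℕ) : ℚ)/2 := by push_cast; ring
    rw [hT, harg, Polynomial.bernoulli_eval_one_add]
    have e2 : (k+1) - 1 = k := by omega
    rw [e2]
    rw [mul_add, ih]
    have hpow : (((2*m+1 : ℕ) : ℚ)/2)^k = ((2*m+1 : ℕ) : ℚ)^k / 2^k := div_pow _ _ _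
    rw [mul_add, hpow]
    have h2 : (2:ℚ)^(k+1) = 2 * 2^k := by ring
    rw [h2]
    push_cast
    field_simp

lemma sumform {k : ℕ} (hk : Even k) (hk0 : 0 < k) (m : ℕ) :
    2 * ((k:ℚ)+1) * (T k m : ℚ) =
      ∑ i ∈ range (k+2), bernoulli i * ((k+1).choose i) * 2^i * ((2*m+1 : ℕ) : ℚ)^(k+1-i) := by
  rw [master hk hk0, eval_bernoulli, Finset.mul_sum]
  apply Finset.sum_congr rfl
  intro i hi
  have hik : i ≤ k+1 := by have := Finset.mem_range.1 hi; omega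
  have hsplit : (2:ℚ)^(k+1) = 2^i * 2^(k+1-i) := by
    rw [← pow_add]; congr 1; omega
  rw [div_pow, hsplit]
  have h2 : ((2:ℚ)^(k+1-i)) ≠ 0 := by positivity
  field_simp

lemma factorization_le_sub_one {p t : ℕ} (hp : p.Prime) (ht : t ≠ 0) :
    t.factorization p ≤ t - 1 := by
  set e := t.factorization p with he
  have h1 : p ^ e ∣ t := Nat.ordProj_dvd t p
  have h2 : p ^ e ≤ t := Nat.le_of_dvd (Nat.pos_of_ne_zero ht) h1
  have h3 : e < 2 ^ e := Nat.lt_two_pow_self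
  have h4 : 2 ^ e ≤ p ^ e := Nat.pow_le_pow_left hp.two_le e
  omega

lemma vonStaudt {p : ℕ} (hp : p.Prime) (j : ℕ) : PIn p ((p:ℚ) * bernoulli j) := by
  induction j using Nat.strong_induction_on with
  | _ j ih =>
    rw [faul j p, sub_eq_add_neg]
    apply PIn_add hp
    · have : (∑ i ∈ range p, (i:ℚ)^j) = ((∑ i ∈ range p, i^j : ℕ) : ℚ) := by
        push_cast; ring
      rw [this]
      exact PIn_nat p hp.two_le _
    · rw [← Finset.sum_neg_distrib]
      apply PIn_sum hp
      intro i hi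
      have hij : i < j := Finset.mem_range.1 hi
      apply PIn_neg
      set t := j + 1 - i with htdef
      have ht2 : 2 ≤ t := by omega
      have key : (bernoulli i * (j.choose i) * (p:ℚ)^(j+1-i) / ((j+1-i : ℕ) : ℚ))
          = ((p:ℚ) * bernoulli i) * (j.choose i) * (((p^(t-1) : ℕ) : ℚ) / ((t:ℕ) : ℚ)) := by
        rw [← htdef]
        have : (p:ℚ)^t = (p:ℚ) * ((p^(t-1) : ℕ) : ℚ) := by
          push_cast
          rw [← pow_succ']
          congr 1
          omega
        rw [this]
        ring
      rw [key]
      apply PIn_mul hp (PIn_mul hp (ih i hij) (PIn_nat p hp.two_le _))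
      apply PIn_nat_div hp _ _ (by omega)
      exact pow_dvd_pow p (by have := factorization_le_sub_one hp (t := t) (by omega); omega)

lemma N3 {e : ℕ} (he : 1 ≤ e) : e + 2 ≤ 3 ^ e := by
  induction e with
  | zero => omega
  | succ e ih =>
    rcases Nat.eq_zero_or_pos e with h0 | h1
    · subst h0; norm_num
    · have := ih h1
      have h2 : 3 ^ (e+1) = 3 * 3 ^ e := by ring
      omega

lemma fact3_le {t : ℕ} (ht : 2 ≤ t) : t.factorization 3 ≤ t - 2 := by
  set e := t.factorization 3 with he
  rcases Nat.eq_zero_or_pos e with h0 | h1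
  · omega
  · have h2 : 3^e ≤ t := Nat.le_of_dvd (by omega) (Nat.ordProj_dvd t 3)
    have h3 : e + 2 ≤ 3^e := N3 h1
    omega

lemma three_dvd_den {k : ℕ} (hk : Even k) (hk0 : 0 < k) : 3 ∣ (bernoulli k).den := by
  by_contra h
  have hp3 : Nat.Prime 3 := by norm_num
  have hS : (∑ i ∈ range 3, (i:ℚ)^k) = ((1 + 2^k : ℕ) : ℚ) := by
    rw [Finset.sum_range_succ, Finset.sum_range_succ, Finset.sum_range_one]
    push_cast
    rw [zero_pow hk0.ne']
    ring
  have hf := faul k 3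
  rw [hS] at hf
  push_cast at hf
  have hSig : PIn 3 ((∑ i ∈ range k, bernoulli i * (k.choose i) * ((3:ℕ):ℚ)^(k+1-i) / ((k+1-i : ℕ):ℚ)) / 3) := by
    rw [Finset.sum_div]
    apply PIn_sum hp3
    intro i hi
    have hik : i < k := Finset.mem_range.1 hi
    set t := k+1-i with ht
    have ht2 : 2 ≤ t := by omega
    have key : bernoulli i * (k.choose i) * ((3:ℕ):ℚ)^(k+1-i) / ((k+1-i:ℕ):ℚ) / 3
        = (((3:ℕ):ℚ) * bernoulli i) * (k.choose i) * (((3^(t-2) : ℕ):ℚ) / ((t:ℕ):ℚ)) := by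
      rw [← ht]
      push_cast
      rw [show (3:ℚ)^t = 3^2 * 3^(t-2) by rw [← pow_add]; congr 1; omega]
      ring
    rw [key]
    refine PIn_mul hp3 (PIn_mul hp3 (vonStaudt hp3 i) (PIn_nat 3 (by norm_num) _)) ?_
    apply PIn_nat_div hp3 _ _ (by omega)
    exact pow_dvd_pow 3 (fact3_le ht2)
  have hz : PIn 3 (((1+2^k : ℕ):ℚ)/3) := by
    have heq : ((1+2^k : ℕ):ℚ)/3 = bernoulli k +
        (∑ i ∈ range k, bernoulli i * (k.choose i) * ((3:ℕ):ℚ)^(k+1-i) / ((k+1-i : ℕ):ℚ)) / 3 := by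
      push_cast
      push_cast at hf
      linarith
    rw [heq]
    exact PIn_add hp3 h hSig
  -- now extract a contradiction mod 3
  set q : ℚ := ((1+2^k : ℕ):ℚ)/3 with hq
  have hdvd : (q.den : ℤ) ∣ 3 := by
    have h0 := Rat.den_dvd ((1+2^k : ℕ) : ℤ) 3
    rw [Rat.divInt_eq_div] at h0
    have : ((((1+2^k : ℕ) : ℤ)):ℚ) / ((3:ℤ):ℚ) = q := by push_cast; rw [hq]; push_cast; ring
    rwa [this] at h0
  have hden1 : q.den = 1 := by
    have hd : q.den ∣ 3 := by exact_mod_cast hdvd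
    rcases (Nat.dvd_prime hp3).1 hd with h1 | h3
    · exact h1
    · exact absurd (by rw [h3]) hz
  have hnum : (q.num : ℚ) = q := (Rat.den_eq_one_iff q).1 hden1
  have hint : q.num * 3 = (1 + 2^k : ℤ) := by
    have : (q.num : ℚ) * 3 = ((1+2^k : ℕ):ℚ) := by
      rw [hnum, hq]; field_simp
    exact_mod_cast this
  have hdvd3 : (3:ℤ) ∣ (1 + 2^k : ℤ) := Dvd.intro q.num (by linarith)
  have hz3 : ((1 + 2^k : ℤ) : ZMod 3) = 0 := (ZMod.intCast_zmod_eq_zero_iff_dvd _ 3).2 hdvd3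
  push_cast at hz3
  obtain ⟨l, hl⟩ := hk
  rw [show (2 : ZMod 3) = -1 by decide, hl, ← two_mul, pow_mul] at hz3
  norm_num at hz3
  exact absurd hz3 (by decide)

lemma decomp {k : ℕ} (hk : Even k) (hk2 : 2 ≤ k) (m : ℕ) :
    ((bernoulli k).den : ℚ) * (T k m : ℚ)
      - 2^(k-1) * ((2*m+1 : ℕ):ℚ) * ((bernoulli k).num : ℚ)
    = ((2*m+1:ℕ):ℚ)^2 * ∑ i ∈ range k, ((bernoulli k).den : ℚ) * bernoulli i *
        ((k.choose i):ℚ) * 2^i * ((2*m+1:ℕ):ℚ)^(k-1-i) / (2 * ((k+1-i : ℕ):ℚ)) := by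
  have hk0 : 0 < k := by omega
  have hsf := sumform hk hk0 m
  set n : ℚ := ((2*m+1:ℕ):ℚ) with hn
  set D : ℚ := ((bernoulli k).den : ℚ) with hD
  rw [Finset.sum_range_succ, Finset.sum_range_succ] at hsf
  have hb1 : bernoulli (k+1) = 0 := by
    refine bernoulli_odd_zero ?_ (by omega)
    rcases hk with ⟨l, hl⟩; exact ⟨l, by omega⟩
  have e1 : k+1-k = 1 := by omega
  have e0 : k+1-(k+1) = 0 := by omega
  rw [hb1, e1, e0, Nat.choose_succ_self_right, Nat.choose_self] at hsf
  -- hsf : 2*(k+1)*T = Σ + B_k*(k+1)*2^k*n^1 + 0*...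
  have hden : D ≠ 0 := by
    rw [hD]
    exact_mod_cast (bernoulli k).den_nz
  have hU : ((bernoulli k).num : ℚ) = bernoulli k * D := by
    conv_rhs => rw [← Rat.num_div_den (bernoulli k)]
    rw [div_mul_cancel₀ _ hden]
  have hterm : ∀ i ∈ range k,
      n^2 * (D * bernoulli i * ((k.choose i):ℚ) * 2^i * n^(k-1-i) / (2 * ((k+1-i : ℕ):ℚ)))
      = D * (bernoulli i * (((k+1).choose i):ℚ) * 2^i * n^(k+1-i)) / (2*((k:ℚ)+1)) := by
    intro i hi
    have hik : i < k := Finset.mem_range.1 hi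
    have hcne : ((k+1-i:ℕ):ℚ) ≠ 0 := by
      have : 0 < k+1-i := by omega
      exact_mod_cast this.ne'
    have hk1ne : (2*((k:ℚ)+1)) ≠ 0 := by positivity
    have h2ne : (2 * ((k+1-i:ℕ):ℚ)) ≠ 0 := by
      intro hcontra
      apply hcne
      linarith [hcontra]
    have hchoose := choose_key k i
    have hpow : n^2 * n^(k-1-i) = n^(k+1-i) := by
      rw [← pow_add]; congr 1; omega
    rw [← mul_div_assoc, div_eq_div_iff h2ne hk1ne, ← hpow]
    linear_combination (-(n^2 * n^(k-1-i) * D * bernoulli i * 2^i * 2)) * hchoose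
  rw [Finset.mul_sum, Finset.sum_congr rfl hterm, ← Finset.sum_div, ← Finset.mul_sum]
  have hSum : (∑ i ∈ range k, bernoulli i * (((k+1).choose i):ℚ) * 2^i * n^(k+1-i))
      = 2*((k:ℚ)+1)*(T k m : ℚ) - bernoulli k * ((k:ℚ)+1) * 2^k * n := by
    push_cast at hsf ⊢
    linarith
  rw [hSum, hU]
  have h2k : (2:ℚ)^k = 2*2^(k-1) := by
    rw [← pow_succ']; congr 1; omega
  have hk1ne : (2*((k:ℚ)+1)) ≠ 0 := by positivity
  rw [eq_div_iff hk1ne]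
  linear_combination (D * bernoulli k * n * ((k:ℚ)+1)) * h2k

lemma N5 {e : ℕ} (he : 1 ≤ e) : e + 3 ≤ 5 ^ e := by
  induction e with
  | zero => omega
  | succ e ih =>
    rcases Nat.eq_zero_or_pos e with h0 | h1
    · subst h0; norm_num
    · have := ih h1
      have h2 : 5 ^ (e+1) = 5 * 5 ^ e := by ring
      omega

lemma factp_le {p t : ℕ} (hp : p.Prime) (hp3 : 3 ≤ p) (ht : 2 ≤ t) :
    t.factorization p ≤ t - 2 := by
  set e := t.factorization p with he
  rcases Nat.eq_zero_or_pos e with h0 | h1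
  · omega
  · have h2 : p^e ≤ t := Nat.le_of_dvd (by omega) (Nat.ordProj_dvd t p)
    have h25 : 3^e ≤ p^e := Nat.pow_le_pow_left hp3 e
    have h3 : e + 2 ≤ 3^e := N3 h1
    omega

lemma factp5_le {p t : ℕ} (hp : p.Prime) (hp5 : 5 ≤ p) (ht : 3 ≤ t) :
    t.factorization p + 1 ≤ t - 2 := by
  set e := t.factorization p with he
  rcases Nat.eq_zero_or_pos e with h0 | h1
  · omega
  · have h2 : p^e ≤ t := Nat.le_of_dvd (by omega) (Nat.ordProj_dvd t p)
    have h25 : 5^e ≤ p^e := Nat.pow_le_pow_left hp5 e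
    have h3 : e + 3 ≤ 5^e := N5 h1
    omega

lemma PIn_npow_div {p n : ℕ} (hp : p.Prime) (hpn : p ∣ n) (c t : ℕ) (ht : t ≠ 0)
    (hle : t.factorization p ≤ c) : PIn p ((n:ℚ)^c / (t:ℚ)) := by
  rw [show ((n:ℚ))^c = ((n^c : ℕ):ℚ) by push_cast; ring]
  exact PIn_nat_div hp (n^c) t ht
    (dvd_trans (pow_dvd_pow p hle) (pow_dvd_pow_of_dvd hpn c))

lemma term_mem {k m : ℕ} (hk : Even k) (hk2 : 2 ≤ k) {p : ℕ} (hp : p.Prime)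
    (hpn : p ∣ 2*m+1) (i : ℕ) (hik : i < k) :
    PIn p (((bernoulli k).den : ℚ) * bernoulli i * ((k.choose i):ℚ) * 2^i *
      ((2*m+1:ℕ):ℚ)^(k-1-i) / (2 * ((k+1-i : ℕ):ℚ))) := by
  have hp2 : p ≠ 2 := by
    rintro rfl
    omega
  have hp3 : 3 ≤ p := by have := hp.two_le; omega
  have hnd2 : ¬ (p:ℤ) ∣ 2 := by
    intro hdvd
    have := Int.le_of_dvd (by norm_num) hdvd
    omega
  have hphalf : PIn p (1/2 : ℚ) := by
    have := PIn_div_int hp 1 2 hnd2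
    simpa using this
  have hs2 : 2 ≤ k+1-i := by omega
  have hsne : ((k+1-i:ℕ):ℚ) ≠ 0 := by
    have : 0 < k+1-i := by omega
    exact_mod_cast this.ne'
  by_cases hbz : bernoulli i = 0
  · rw [hbz]
    have : ((bernoulli k).den : ℚ) * 0 * ((k.choose i):ℚ) * 2^i *
        ((2*m+1:ℕ):ℚ)^(k-1-i) / (2 * ((k+1-i:ℕ):ℚ)) = 0 := by
      ring
    rw [this]
    exact PIn_zero p hp.two_le
  by_cases hi01 : i ≤ 1
  · have hbint : PIn p (bernoulli i) := by
      interval_cases i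
      · rw [bernoulli_zero]
        simpa using PIn_int p hp.two_le 1
      · rw [bernoulli_one]
        have := PIn_div_int hp (-1) 2 hnd2
        simpa using this
    have key : ((bernoulli k).den : ℚ) * bernoulli i * ((k.choose i):ℚ) * 2^i *
        ((2*m+1:ℕ):ℚ)^(k-1-i) / (2 * ((k+1-i:ℕ):ℚ))
        = bernoulli i * (((bernoulli k).den * k.choose i * 2^i : ℕ) : ℚ) * (1/2) *
          (((2*m+1:ℕ):ℚ)^(k-1-i) / ((k+1-i:ℕ):ℚ)) := by
      push_cast
      field_simp
    rw [key]
    refine PIn_mul hp (PIn_mul hp (PIn_mul hp hbint (PIn_nat p hp.two_le _)) hphalf) ?_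
    refine PIn_npow_div hp hpn (k-1-i) (k+1-i) (by omega) ?_
    have := factp_le hp hp3 hs2
    omega
  · have hi2 : 2 ≤ i := by omega
    have hieven : Even i := by
      rcases Nat.even_or_odd i with h | h
      · exact h
      · exact absurd (bernoulli_odd_zero h (by omega)) hbz
    have hs3 : 3 ≤ k+1-i := by
      obtain ⟨a, ha⟩ := hk
      obtain ⟨b, hb⟩ := hieven
      omega
    by_cases hp5 : 5 ≤ p
    · have hpne : ((p:ℕ):ℚ) ≠ 0 := by
        have := hp.pos
        exact_mod_cast this.ne'
      have hpsne : ((p*(k+1-i) : ℕ):ℚ) ≠ 0 := by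
        push_cast
        intro hcon
        rcases mul_eq_zero.1 hcon with h | h
        exacts [hpne h, hsne h]
      have key2 : ((bernoulli k).den : ℚ) * bernoulli i * ((k.choose i):ℚ) * 2^i *
          ((2*m+1:ℕ):ℚ)^(k-1-i) / (2 * ((k+1-i:ℕ):ℚ))
          = ((p:ℚ) * bernoulli i) * (((bernoulli k).den * k.choose i * 2^i : ℕ) : ℚ) * (1/2) *
            (((2*m+1:ℕ):ℚ)^(k-1-i) / ((p*(k+1-i) : ℕ):ℚ)) := by
        push_cast
        field_simp
      rw [key2]
      refine PIn_mul hp (PIn_mul hp (PIn_mul hp (vonStaudt hp i) (PIn_nat p hp.two_le _)) hphalf) ?_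
      refine PIn_npow_div hp hpn (k-1-i) (p*(k+1-i)) (by positivity) ?_
      have hfact : (p*(k+1-i)).factorization p = (k+1-i).factorization p + 1 := by
        rw [Nat.factorization_mul hp.ne_zero (by omega), hp.factorization]
        simp
        omega
      rw [hfact]
      have := factp5_le hp hp5 hs3
      omega
    · have hp34 : p = 3 ∨ p = 4 := by omega
      have hp3' : p = 3 := by
        rcases hp34 with h | h
        · exact h
        · subst h; norm_num at hp
      subst hp3'
      obtain ⟨D', hD'⟩ := three_dvd_den hk (by omega)
      have key3 : ((bernoulli k).den : ℚ) * bernoulli i * ((k.choose i):ℚ) * 2^i *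
          ((2*m+1:ℕ):ℚ)^(k-1-i) / (2 * ((k+1-i:ℕ):ℚ))
          = ((3:ℚ) * bernoulli i) * (((D' * k.choose i * 2^i : ℕ)):ℚ) * (1/2) *
            (((2*m+1:ℕ):ℚ)^(k-1-i) / ((k+1-i:ℕ):ℚ)) := by
        rw [hD']
        push_cast
        field_simp
      rw [key3]
      have hvs : PIn 3 ((3:ℚ) * bernoulli i) := by
        have := vonStaudt hp i
        simpa using this
      refine PIn_mul hp (PIn_mul hp (PIn_mul hp hvs (PIn_nat 3 (by norm_num) _)) hphalf) ?_
      refine PIn_npow_div hp hpn (k-1-i) (k+1-i) (by omega) ?_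
      have := factp_le hp (by norm_num) hs2
      omega

lemma bridge (A : ℤ) (n : ℕ) (hn : n ≠ 0)
    (h : ∀ p, p.Prime → p ∣ n → PIn p ((A:ℚ)/((n:ℕ):ℚ)^2)) : (n:ℤ)^2 ∣ A := by
  set q : ℚ := (A:ℚ)/((n:ℕ):ℚ)^2 with hq
  have hden : (q.den : ℤ) ∣ ((n:ℤ)^2) := by
    have h0 := Rat.den_dvd A ((n:ℤ)^2)
    rw [Rat.divInt_eq_div] at h0
    have : ((A:ℤ):ℚ) / (((n:ℤ)^2 : ℤ):ℚ) = q := by rw [hq]; push_cast; ring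
    rwa [this] at h0
  have hdenn : q.den ∣ n^2 := by
    have : ((q.den:ℤ)) ∣ ((n^2 : ℕ) : ℤ) := by push_cast at hden ⊢; exact hden
    exact_mod_cast this
  have hden1 : q.den = 1 := by
    by_contra hne
    set p := q.den.minFac with hpmin
    have hp : p.Prime := Nat.minFac_prime hne
    have hpd : p ∣ q.den := Nat.minFac_dvd _
    have hpn : p ∣ n := hp.dvd_of_dvd_pow (hpd.trans hdenn)
    exact (h p hp hpn) hpd
  have hnum : (q.num : ℚ) = q := (Rat.den_eq_one_iff q).1 hden1
  have : (q.num : ℚ) * ((n:ℕ):ℚ)^2 = (A:ℚ) := by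
    rw [hnum, hq]
    have hnne : ((n:ℕ):ℚ) ≠ 0 := by exact_mod_cast hn
    field_simp
  have hfin : q.num * (n:ℤ)^2 = A := by exact_mod_cast this
  exact Dvd.intro q.num (by linarith)

lemma star {k m : ℕ} (hk : Even k) (hk2 : 2 ≤ k) :
    ((2*m+1 : ℕ):ℤ)^2 ∣ (((bernoulli k).den : ℤ) * (T k m : ℤ)
      - 2^(k-1) * ((2*m+1 : ℕ):ℤ) * (bernoulli k).num) := by
  apply bridge _ (2*m+1) (by omega)
  intro p hp hpn
  have hnne : ((2*m+1:ℕ):ℚ) ≠ 0 := by positivity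
  have hcast : ((((bernoulli k).den : ℤ) * (T k m : ℤ)
      - 2^(k-1) * ((2*m+1 : ℕ):ℤ) * (bernoulli k).num : ℤ) : ℚ)
      = ((bernoulli k).den : ℚ) * (T k m : ℚ)
        - 2^(k-1) * ((2*m+1 : ℕ):ℚ) * ((bernoulli k).num : ℚ) := by
    push_cast; ring
  rw [hcast, decomp hk hk2 m, mul_comm, mul_div_assoc, div_self (by positivity), mul_one]
  exact PIn_sum hp fun i hi => term_mem hk hk2 hp hpn i (Finset.mem_range.1 hi)

theorem stmt_10 (k m : ℕ) (hk : 0 < k) (hm : 0 < m) (heven : Even k) :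
    (2 * m + 1) ^ 2 ∣ T k m ↔ ((2 * m + 1 : ℕ) : ℤ) ∣ (bernoulli k).num := by
  have hk2 : 2 ≤ k := by
    rcases heven with ⟨a, ha⟩; omega
  have hstar := star (k := k) (m := m) heven hk2
  set n : ℤ := ((2*m+1 : ℕ) : ℤ) with hn
  set D : ℤ := ((bernoulli k).den : ℤ) with hD
  set U : ℤ := (bernoulli k).num with hU
  have hn0 : n ≠ 0 := by rw [hn]; positivity
  have hcop2 : IsCoprime (n : ℤ) 2 := ⟨1, -(m:ℤ), by rw [hn]; push_cast; ring⟩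
  constructor
  · intro h
    have hT : n^2 ∣ (T k m : ℤ) := by
      rw [hn]
      have := Int.natCast_dvd_natCast.2 h
      push_cast at this ⊢
      exact this
    have h2 : n^2 ∣ 2^(k-1) * n * U := by
      have hDT : n^2 ∣ D * (T k m : ℤ) := Dvd.dvd.mul_left hT D
      have := dvd_sub hDT hstar
      simpa using this
    have h3 : n ∣ 2^(k-1) * U := by
      have heq : 2^(k-1) * n * U = n * (2^(k-1) * U) := by ring
      rw [heq, pow_two] at h2
      exact (mul_dvd_mul_iff_left hn0).1 h2
    have hcoppow : IsCoprime n ((2:ℤ)^(k-1)) := IsCoprime.pow_right hcop2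
    exact hcoppow.dvd_of_dvd_mul_left h3
  · intro h
    have hcopD : IsCoprime n D := by
      rw [Int.isCoprime_iff_gcd_eq_one]
      by_contra hne
      obtain ⟨p, hp, hpdvd⟩ := Nat.exists_prime_and_dvd hne
      have hp' : p.Prime := hp
      rw [Int.gcd] at hpdvd
      have h1 : p ∣ n.natAbs := hpdvd.trans (Nat.gcd_dvd_left _ _)
      have h2 : p ∣ D.natAbs := hpdvd.trans (Nat.gcd_dvd_right _ _)
      have h3 : n.natAbs ∣ U.natAbs := Int.natAbs_dvd_natAbs.2 h
      have h4 : p ∣ Nat.gcd U.natAbs D.natAbs := Nat.dvd_gcd (h1.trans h3) h2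
      have h5 : Nat.gcd U.natAbs D.natAbs = 1 := by
        have hre := (bernoulli k).reduced
        have : D.natAbs = (bernoulli k).den := by rw [hD]; exact Int.natAbs_natCast _
        rw [this]
        exact hre
      rw [h5] at h4
      have := Nat.le_of_dvd one_pos h4
      have := hp'.two_le
      omega
    have h6 : n^2 ∣ 2^(k-1) * n * U := by
      obtain ⟨c, hc⟩ := h
      rw [hc, pow_two]
      exact ⟨2^(k-1) * c, by ring⟩
    have hsum : n^2 ∣ D * (T k m : ℤ) := by
      have := dvd_add hstar h6
      simpa using this
    have hcopD2 : IsCoprime (n^2) D := hcopD.pow_left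
    have hTdvd : n^2 ∣ (T k m : ℤ) := hcopD2.dvd_of_dvd_mul_left hsum
    rw [hn] at hTdvd
    exact_mod_cast hTdvd
end

section
/- Let a be a positive integer and let (t,q) be a potentially helpful pair for a. Then (t,q) is a helpful pair of the first kind for a if and only if (t,q) is a helpful pair of the second kind for a. -/
/-- `(r, p)` is an irregular pair if `p` is an odd prime, `r` is even with
`2 ≤ r ≤ p - 3`, and `p` divides the numerator of the Bernoulli number `B r`. -/
def IsIrregularPair (r p : ℕ) : Prop :=
  p.Prime ∧ Odd p ∧ Even r ∧ 2 ≤ r ∧ r ≤ p - 3 ∧ (p : ℤ) ∣ (bernoulli r).num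

/-- `(t, q)` is a potentially helpful pair for `a` if `q > 3` is a prime,
`t` is even with `2 ≤ t ≤ q - 3`, `q` does not divide `a`, and `(t, q)` is not
an irregular pair. -/
def PotentiallyHelpfulPair (a t q : ℕ) : Prop :=
  q.Prime ∧ 3 < q ∧ Even t ∧ 2 ≤ t ∧ t ≤ q - 3 ∧ ¬ q ∣ a ∧ ¬ IsIrregularPair t q

/-- A potentially helpful pair `(t, q)` is a helpful pair of the first kind for `a`
if `a·S_t(x) ≡ x^t (mod q)` implies `x ≡ 0 (mod q)` for every positive integer `x`. -/
def HelpfulPairFirstKind (a t q : ℕ) : Prop :=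
  ∀ x : ℕ, 0 < x → a * S t x ≡ x ^ t [MOD q] → x ≡ 0 [MOD q]

/-- A potentially helpful pair `(t, q)` is a helpful pair of the second kind for `a`
if `a·T_t(x) ≡ (2x+1)^t (mod q)` implies `2x+1 ≡ 0 (mod q)` for every positive
integer `x`. -/
def HelpfulPairSecondKind (a t q : ℕ) : Prop :=
  ∀ x : ℕ, 0 < x → a * T t x ≡ (2 * x + 1) ^ t [MOD q] → 2 * x + 1 ≡ 0 [MOD q]


/-- sum of t-th powers of 0..x-1 in ZMod q -/
def sZ (t q x : ℕ) : ZMod q := ∑ j ∈ Finset.range x, (j : ZMod q) ^ t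

lemma S_cast_s17 (t q x : ℕ) (ht : 0 < t) : ((S t x : ℕ) : ZMod q) = sZ t q x := by
  rcases Nat.eq_zero_or_pos x with hx | hx
  · subst hx; simp [S, sZ]
  · have : Finset.range x = Finset.Ico 0 x := by rw [Finset.range_eq_Ico]
    rw [sZ, this, Finset.sum_eq_sum_Ico_succ_bot hx]
    simp [S, zero_pow ht.ne', Nat.cast_sum]

lemma sum_range_zmod (q : ℕ) [NeZero q] (f : ZMod q → ZMod q) :
    ∑ j ∈ Finset.range q, f (j : ZMod q) = ∑ z : ZMod q, f z := by
  refine Finset.sum_nbij' (fun j => (j : ZMod q)) (fun z => z.val) ?_ ?_ ?_ ?_ ?_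
  · simp
  · simp [ZMod.val_lt]
  · intro j hj
    simp only [Finset.mem_range] at hj
    simp [ZMod.val_cast_of_lt hj]
  · intro z _
    simp [ZMod.natCast_val, ZMod.cast_id]
  · intro j _
    rfl

lemma sum_all_pow_zero (q t : ℕ) [Fact q.Prime] (htq : t < q - 1) :
    ∑ z : ZMod q, z ^ t = 0 := by
  have := FiniteField.sum_pow_lt_card_sub_one (K := ZMod q) t (by rwa [ZMod.card])
  exact this

lemma sZ_zero_at_q (q t : ℕ) [Fact q.Prime] (htq : t < q - 1) : sZ t q q = 0 := by
  rw [sZ, sum_range_zmod q (fun z => z ^ t)]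
  exact sum_all_pow_zero q t htq

lemma sZ_add_q (q t x : ℕ) [Fact q.Prime] (htq : t < q - 1) :
    sZ t q (x + q) = sZ t q x := by
  rw [sZ, Finset.sum_range_add, ← sZ]
  have h2 : ∑ j ∈ Finset.range q, ((x + j : ℕ) : ZMod q) ^ t = 0 := by
    have : ∀ j ∈ Finset.range q, ((x + j : ℕ) : ZMod q) ^ t
        = (fun z : ZMod q => ((x : ZMod q) + z) ^ t) ((j : ℕ) : ZMod q) := by
      intro j _; push_cast; ring
    rw [Finset.sum_congr rfl this, sum_range_zmod q (fun z => ((x : ZMod q) + z) ^ t)]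
    rw [show (∑ z : ZMod q, ((x : ZMod q) + z) ^ t) = ∑ z : ZMod q, z ^ t from
      Fintype.sum_equiv (Equiv.addLeft (x : ZMod q)) _ _ (fun z => rfl)]
    exact sum_all_pow_zero q t htq
  rw [h2, add_zero]

lemma sZ_mod (q t x : ℕ) [Fact q.Prime] (htq : t < q - 1) : sZ t q x = sZ t q (x % q) := by
  conv_lhs => rw [← Nat.mod_add_div x q]
  generalize x / q = k
  induction k with
  | zero => simp
  | succ n ih =>
      have : x % q + q * (n + 1) = (x % q + q * n) + q := by ring
      rw [this, sZ_add_q q t _ htq, ih]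

lemma sZ_half (q t : ℕ) [Fact q.Prime] (hq3 : 3 < q) (hte : Even t) (ht2 : 2 ≤ t)
    (htq : t < q - 1) : sZ t q ((q + 1) / 2) = 0 := by
  have hq : q.Prime := Fact.out
  have hqodd : q % 2 = 1 := Nat.odd_iff.mp (hq.odd_of_ne_two (by omega))
  set c := (q + 1) / 2 with hc
  have h2c : 2 * c = q + 1 := by omega
  have hcq : c + (c - 1) = q := by omega
  have hq0 : sZ t q (c + (c - 1)) = 0 := by rw [hcq]; exact sZ_zero_at_q q t htq
  rw [sZ, Finset.sum_range_add] at hq0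
  have hrefl : ∑ j ∈ Finset.range (c - 1), ((c + j : ℕ) : ZMod q) ^ t = sZ t q c := by
    rw [← Finset.sum_range_reflect]
    have hcongr : ∀ j ∈ Finset.range (c - 1),
        ((c + (c - 1 - 1 - j) : ℕ) : ZMod q) ^ t = ((j + 1 : ℕ) : ZMod q) ^ t := by
      intro j hj
      simp only [Finset.mem_range] at hj
      have h1 : c + (c - 1 - 1 - j) = q - (j + 1) := by omega
      rw [h1]
      have h2 : ((q - (j + 1) : ℕ) : ZMod q) = -((j + 1 : ℕ) : ZMod q) := by
        rw [Nat.cast_sub (by omega : j + 1 ≤ q)]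
        simp
      rw [h2, hte.neg_pow]
    rw [Finset.sum_congr rfl hcongr]
    have hc1 : c = (c - 1) + 1 := by omega
    rw [sZ, hc1, Finset.sum_range_succ']
    simp [zero_pow (by omega : t ≠ 0)]
  rw [hrefl, ← sZ] at hq0
  have h2ne : (2 : ZMod q) ≠ 0 := by
    have h : ((2 : ℕ) : ZMod q) ≠ 0 := by
      rw [Ne, ZMod.natCast_eq_zero_iff]
      intro h
      exact absurd (Nat.le_of_dvd (by omega) h) (by omega)
    simpa using h
  have h2m : (2 : ZMod q) * sZ t q c = 0 := by rw [two_mul]; exact hq0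
  exact (mul_eq_zero.mp h2m).resolve_left h2ne

lemma T_cast (q t x : ℕ) [Fact q.Prime] (hq3 : 3 < q) (hte : Even t) (ht2 : 2 ≤ t)
    (htq : t < q - 1) :
    ((T t x : ℕ) : ZMod q) = 2 ^ t * sZ t q (x + (q + 1) / 2) := by
  have hq : q.Prime := Fact.out
  have hqodd : q % 2 = 1 := Nat.odd_iff.mp (hq.odd_of_ne_two (by omega))
  set c := (q + 1) / 2 with hc
  have h2c : 2 * c = q + 1 := by omega
  have key : ∀ j : ℕ, ((2 * j + 1 : ℕ) : ZMod q) = 2 * ((c + j : ℕ) : ZMod q) := by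
    intro j
    have h1 : (2 : ZMod q) * ((c + j : ℕ) : ZMod q) = ((2 * c + 2 * j : ℕ) : ZMod q) := by
      push_cast; ring
    rw [h1, show 2 * c + 2 * j = q + (2 * j + 1) by omega]
    push_cast
    simp
  have hTsum : ((T t x : ℕ) : ZMod q) = ∑ j ∈ Finset.range x, ((2 * j + 1 : ℕ) : ZMod q) ^ t := by
    rw [T]; push_cast; rfl
  rw [hTsum]
  have hterm : ∀ j ∈ Finset.range x,
      ((2 * j + 1 : ℕ) : ZMod q) ^ t = 2 ^ t * ((c + j : ℕ) : ZMod q) ^ t := by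
    intro j _
    rw [key j, mul_pow]
  rw [Finset.sum_congr rfl hterm, ← Finset.mul_sum]
  congr 1
  have : sZ t q (x + c) = sZ t q c + ∑ j ∈ Finset.range x, ((c + j : ℕ) : ZMod q) ^ t := by
    rw [show x + c = c + x by ring, sZ, Finset.sum_range_add]
    rfl
  rw [this, sZ_half q t hq3 hte ht2 htq, zero_add]

theorem stmt_17 (a t q : ℕ) (ha : 0 < a) (hpot : PotentiallyHelpfulPair a t q) :
    HelpfulPairFirstKind a t q ↔ HelpfulPairSecondKind a t q := by
  obtain ⟨hq, hq3, hte, ht2, htq3, -, -⟩ := hpot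
  haveI : Fact q.Prime := ⟨hq⟩
  have htq : t < q - 1 := by omega
  have hqodd : q % 2 = 1 := Nat.odd_iff.mp (hq.odd_of_ne_two (by omega))
  set c := (q + 1) / 2 with hc
  have h2c : 2 * c = q + 1 := by omega
  have hcltq : c < q := by omega
  have h2ne : (2 : ZMod q) ≠ 0 := by
    have h : ((2 : ℕ) : ZMod q) ≠ 0 := by
      rw [Ne, ZMod.natCast_eq_zero_iff]
      intro h
      exact absurd (Nat.le_of_dvd (by omega) h) (by omega)
    simpa using h
  have hsZcast : ∀ x : ℕ, sZ t q x = sZ t q ((x : ZMod q)).val := by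
    intro x
    rw [ZMod.val_natCast, ← sZ_mod q t x htq]
  have hvalcast : ∀ v : ZMod q, ((v.val : ℕ) : ZMod q) = v := by
    intro v
    rw [ZMod.natCast_val, ZMod.cast_id]
  have hmodeq : ∀ m n : ℕ, (a * m ≡ n [MOD q]) ↔ (a : ZMod q) * (m : ZMod q) = (n : ZMod q) := by
    intro m n
    rw [← ZMod.natCast_eq_natCast_iff, Nat.cast_mul]
  have hz : ∀ m : ℕ, (m ≡ 0 [MOD q]) ↔ ((m : ℕ) : ZMod q) = 0 := by
    intro m
    rw [Nat.modEq_zero_iff_dvd, ← ZMod.natCast_eq_zero_iff]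
  -- the common reformulation
  have h1 : HelpfulPairFirstKind a t q ↔
      ∀ v : ZMod q, v ≠ 0 → (a : ZMod q) * sZ t q v.val ≠ v ^ t := by
    constructor
    · intro h v hv hcon
      have hx : 0 < v.val := Nat.pos_of_ne_zero fun h0 => hv (by rwa [← ZMod.val_eq_zero])
      have hcong : a * S t v.val ≡ v.val ^ t [MOD q] := by
        rw [hmodeq, S_cast_s17 t q v.val (by omega), Nat.cast_pow, hvalcast]
        exact hcon
      have h0 := (hz v.val).mp (h v.val hx hcong)
      rw [hvalcast] at h0
      exact hv h0
    · intro h x hx hcong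
      rw [hz]
      by_contra hv
      apply h (x : ZMod q) hv
      rw [← hsZcast]
      have := (hmodeq _ _).mp hcong
      rwa [S_cast_s17 t q x (by omega), Nat.cast_pow] at this
  have h2 : HelpfulPairSecondKind a t q ↔
      ∀ v : ZMod q, v ≠ 0 → (a : ZMod q) * sZ t q v.val ≠ v ^ t := by
    constructor
    · intro h v hv hcon
      set x := v.val + (q - c) with hxdef
      have hx : 0 < x := by omega
      have hxc : x + c = v.val + q := by omega
      have hcastxc : ((x + c : ℕ) : ZMod q) = v := by
        rw [hxc, Nat.cast_add, ZMod.natCast_self, add_zero, hvalcast]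
      have hsZx : sZ t q (x + c) = sZ t q v.val := by
        rw [hxc, sZ_add_q q t _ htq]
      have h21 : ((2 * x + 1 : ℕ) : ZMod q) = 2 * v := by
        have e : (2 * x + 1) + q = 2 * (x + c) := by omega
        have : ((2 * x + 1 : ℕ) : ZMod q) = (((2 * x + 1) + q : ℕ) : ZMod q) := by
          push_cast
          simp
        rw [this, e, Nat.cast_mul, hcastxc, Nat.cast_ofNat]
      have hcong : a * T t x ≡ (2 * x + 1) ^ t [MOD q] := by
        rw [hmodeq, T_cast q t x hq3 hte ht2 htq, ← hc, hsZx, Nat.cast_pow, h21, mul_pow,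
          ← mul_assoc, mul_comm (a : ZMod q) (2 ^ t : ZMod q), mul_assoc, hcon]
      have h0 := (hz _).mp (h x hx hcong)
      rw [h21] at h0
      rcases mul_eq_zero.mp h0 with h' | h'
      · exact h2ne h'
      · exact hv h'
    · intro h x hx hcong
      rw [hz, show ((2 * x + 1 : ℕ) : ZMod q) = (((2 * x + 1) + q : ℕ) : ZMod q) by
        push_cast; simp,
        show (2 * x + 1) + q = 2 * (x + c) by omega, Nat.cast_mul, Nat.cast_ofNat]
      set v := ((x + c : ℕ) : ZMod q) with hvdef
      rcases eq_or_ne v 0 with hv | hv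
      · rw [hv, mul_zero]
      · exfalso
        apply h v hv
        have hcc := (hmodeq _ _).mp hcong
        rw [T_cast q t x hq3 hte ht2 htq, ← hc, Nat.cast_pow] at hcc
        have h21 : ((2 * x + 1 : ℕ) : ZMod q) = 2 * v := by
          rw [show ((2 * x + 1 : ℕ) : ZMod q) = (((2 * x + 1) + q : ℕ) : ZMod q) by
            push_cast; simp,
            show (2 * x + 1) + q = 2 * (x + c) by omega, Nat.cast_mul, Nat.cast_ofNat]
        rw [h21, mul_pow, ← mul_assoc, mul_comm (a : ZMod q) (2 ^ t : ZMod q), mul_assoc] at hcc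
        have hcancel := mul_left_cancel₀ (pow_ne_zero t h2ne) hcc
        rwa [hsZcast (x + c)] at hcancel
  rw [h1, h2]
end

section
/- Suppose a, k, m are positive integers with a·T_k(m) = (2m+1)^k and m > 1. If a ≡ 1 (mod 4), then ord_2(am − 1) = 2 + ord_2(k); and if a ≡ 3 (mod 4), then ord_2(am − 1) ≥ 3 + ord_2(k). -/
namespace Aux19

/-- raising `1 + 2^(s+1)*c` to any power `n`. -/
lemma pow_any (s c x : ℕ) (hx : x = 1 + 2^(s+1)*c) (n : ℕ) :
    ∃ d, x^n = 1 + 2^(s+1)*d ∧ d % 2 = (n*c) % 2 := by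
  induction n with
  | zero => exact ⟨0, by simp, by simp⟩
  | succ n ih =>
    obtain ⟨d, hd, hd2⟩ := ih
    refine ⟨d + c + 2^(s+1)*d*c, ?_, ?_⟩
    · rw [pow_succ, hd, hx]; ring
    · have h1 : 2^(s+1)*d*c = 2*(2^s*d*c) := by ring
      have h2 : (n+1)*c = n*c + c := by ring
      omega

/-- iterated squaring of `1 + 2^(s+2)*c`. -/
lemma pow_two_pow (s c x : ℕ) (hx : x = 1 + 2^(s+2)*c) (i : ℕ) :
    ∃ d, x^(2^i) = 1 + 2^(s+2+i)*d ∧ d % 2 = c % 2 := by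
  induction i with
  | zero => exact ⟨c, by simpa using hx, rfl⟩
  | succ i ih =>
    obtain ⟨d, hd, hd2⟩ := ih
    refine ⟨d + 2^(s+1+i)*d^2, ?_, ?_⟩
    · have : x^(2^(i+1)) = (x^(2^i))^2 := by
        rw [← pow_mul, pow_succ]
      rw [this, hd]; ring
    · have h1 : 2^(s+1+i)*d^2 = 2*(2^(s+i)*d^2) := by ring
      omega

/-- key lemma: `(2j+1)^(2^(w+1)*u) = 1 + 2^(w+3)*d` with `d ≡ j(j+1)/2 (mod 2)`. -/
lemma key (w u j : ℕ) (hu : u % 2 = 1) :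
    ∃ d, (2*j+1)^(2^(w+1)*u) = 1 + 2^(w+3)*d ∧ d % 2 = (j*(j+1)/2) % 2 := by
  set t := j*(j+1)/2 with htdef
  have ht : 2*t = j*(j+1) := Nat.two_mul_div_two_of_even (Nat.even_mul_succ_self j)
  have hsq : (2*j+1)^2 = 1 + 2^(1+2)*t := by
    have : (2*j+1)^2 = 1 + 4*(2*t) := by rw [ht]; ring
    rw [this]; ring
  obtain ⟨d1, hd1, hd12⟩ := pow_two_pow 1 t ((2*j+1)^2) hsq w
  obtain ⟨d, hd, hd2⟩ := pow_any (w+2) d1 (((2*j+1)^2)^(2^w))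
    (by rw [hd1]; ring_nf) u
  refine ⟨d, ?_, ?_⟩
  · have he : 2^(w+1)*u = 2*(2^w*u) := by rw [pow_succ]; ring
    rw [he, pow_mul, pow_mul, hd]
  · have hmm := Nat.mul_mod u d1 2
    rw [hu, one_mul] at hmm
    omega

/-- the parity bit of `j(j+1)/2`. -/
def delta (j : ℕ) : ℕ := (j*(j+1)/2) % 2

lemma delta_eq (j : ℕ) : delta j = if j % 4 = 1 ∨ j % 4 = 2 then 1 else 0 := by
  obtain ⟨q, r, hr, hj⟩ : ∃ q r, r < 4 ∧ j = 4*q + r := ⟨j/4, j%4, by omega, by omega⟩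
  have hmod : j % 4 = r := by omega
  subst hj
  unfold delta
  interval_cases r
  · have h : (4*q+0)*((4*q+0)+1) = 2*(2*(q*(4*q+1))) := by ring
    rw [h, Nat.mul_div_cancel_left _ (by norm_num : (0:ℕ) < 2), if_neg (by omega)]
    omega
  · have h : (4*q+1)*((4*q+1)+1) = 2*(2*(4*q*q+3*q)+1) := by ring
    rw [h, Nat.mul_div_cancel_left _ (by norm_num : (0:ℕ) < 2), if_pos (by omega)]
    omega
  · have h : (4*q+2)*((4*q+2)+1) = 2*(2*(4*q*q+5*q+1)+1) := by ring
    rw [h, Nat.mul_div_cancel_left _ (by norm_num : (0:ℕ) < 2), if_pos (by omega)]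
    omega
  · have h : (4*q+3)*((4*q+3)+1) = 2*(2*(4*q*q+7*q+3)) := by ring
    rw [h, Nat.mul_div_cancel_left _ (by norm_num : (0:ℕ) < 2), if_neg (by omega)]
    omega

lemma delta_block (j : ℕ) : delta j + delta (j+1) + delta (j+2) + delta (j+3) = 2 := by
  rw [delta_eq, delta_eq, delta_eq, delta_eq]
  split_ifs <;> omega

lemma sum_delta_even (m : ℕ) (hm : m % 2 = 1) :
    (∑ j ∈ Finset.range m, delta j) % 2 = 0 := by
  have aux : ∀ q r, (∑ j ∈ Finset.range (4*q+r), delta j) % 2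
      = (∑ j ∈ Finset.range r, delta j) % 2 := by
    intro q
    induction q with
    | zero => intro r; norm_num
    | succ q ih =>
      intro r
      have h4 : 4*(q+1)+r = (4*q+r) + 1 + 1 + 1 + 1 := by ring
      rw [h4, Finset.sum_range_succ, Finset.sum_range_succ, Finset.sum_range_succ,
        Finset.sum_range_succ]
      have hb := delta_block (4*q+r)
      have := ih r
      omega
  obtain hr | hr : m % 4 = 1 ∨ m % 4 = 3 := by omega
  · have hm4 : m = 4*(m/4) + 1 := by omega
    rw [hm4, aux]
    simp [Finset.sum_range_succ, delta]
  · have hm4 : m = 4*(m/4) + 3 := by omega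
    rw [hm4, aux]
    simp [Finset.sum_range_succ, delta]

lemma sum_range_to_univ {A : Type*} [AddCommMonoid A] (p : ℕ) [NeZero p]
    (f : ZMod p → A) : ∑ j ∈ Finset.range p, f (j : ZMod p) = ∑ x : ZMod p, f x := by
  exact Finset.sum_nbij' (fun j => ((j : ZMod p))) (fun x => x.val)
    (fun a _ => Finset.mem_univ _)
    (fun x _ => Finset.mem_range.mpr (ZMod.val_lt x))
    (fun a ha => ZMod.val_cast_of_lt (Finset.mem_range.mp ha))
    (fun x _ => ZMod.natCast_rightInverse x)
    (fun a _ => rfl)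

lemma sum_chunk {A : Type*} [AddCommMonoid A] (p : ℕ) (f : ZMod p → A) (t : ℕ) :
    ∑ j ∈ Finset.range (p*t), f (j : ZMod p) = t • ∑ j ∈ Finset.range p, f (j : ZMod p) := by
  induction t with
  | zero => simp
  | succ t ih =>
    have h1 : p*(t+1) = p*t + p := by ring
    rw [h1, Finset.range_eq_Ico, ← Finset.sum_Ico_consecutive _ (Nat.zero_le _)
      (Nat.le_add_right _ _), ← Finset.range_eq_Ico]
    rw [Finset.sum_Ico_eq_sum_range]
    simp only [Nat.add_sub_cancel_left]
    have h2 : ∀ i, f ((p*t + i : ℕ) : ZMod p) = f ((i : ℕ) : ZMod p) := by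
      intro i
      congr 1
      push_cast
      simp [ZMod.natCast_self]
    rw [Finset.sum_congr rfl (fun i _ => h2 i), ih, succ_nsmul]

lemma zmod_sum_pow_eq_zero (p : ℕ) [hp : Fact p.Prime] (hp2 : p ≠ 2) (k : ℕ)
    (hk1 : k % 2 = 1) : ∑ y : ZMod p, y^k = 0 := by
  classical
  have hk0 : k ≠ 0 := by omega
  have hnd : ¬ (Fintype.card (ZMod p) - 1 ∣ k) := by
    rw [ZMod.card]
    intro hd
    have hodd : p % 2 = 1 := Nat.odd_iff.mp (hp.out.odd_of_ne_two hp2)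
    have h2 : 2 ∣ p - 1 := by omega
    have : 2 ∣ k := h2.trans hd
    omega
  let φ : (ZMod p)ˣ ↪ ZMod p := ⟨fun x ↦ x, fun _ _ h => Units.ext h⟩
  have hφ : Finset.univ.map φ = Finset.univ \ {0} := by
    ext x
    simp only [Finset.mem_map, Finset.mem_univ, Function.Embedding.coeFn_mk, true_and,
      Finset.mem_sdiff, Finset.mem_singleton, φ]
    exact isUnit_iff_ne_zero
  calc ∑ y : ZMod p, y^k = ∑ y ∈ Finset.univ \ {(0 : ZMod p)}, y^k := by
        rw [← Finset.sum_sdiff (Finset.subset_univ {(0:ZMod p)}), Finset.sum_singleton,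
          zero_pow hk0, add_zero]
      _ = ∑ y : (ZMod p)ˣ, ((y : ZMod p))^k := by
        rw [← hφ, Finset.sum_map]; rfl
      _ = 0 := by
        rw [FiniteField.sum_pow_units (ZMod p) k, if_neg hnd]

lemma zmod_sum_affine (p : ℕ) [hp : Fact p.Prime] (hp2 : p ≠ 2) (k : ℕ) :
    ∑ x : ZMod p, (2*x+1)^k = ∑ y : ZMod p, y^k := by
  have h2 : (2 : ZMod p) ≠ 0 := by
    intro hh
    have : ((2:ℕ) : ZMod p) = 0 := by push_cast; exact hh
    rw [ZMod.natCast_eq_zero_iff] at this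
    rcases (Nat.prime_dvd_prime_iff_eq hp.out Nat.prime_two).mp this with rfl
    exact hp2 rfl
  exact Fintype.sum_equiv ((Equiv.mulLeft₀ (2 : ZMod p) h2).trans (Equiv.addRight 1))
    _ _ (fun x => by simp)

end Aux19

theorem stmt_19 (a k m : ℕ) (ha : 0 < a) (hk : 0 < k) (hm : 1 < m)
    (h : a * T k m = (2 * m + 1) ^ k) :
    (a % 4 = 1 → padicValNat 2 (a * m - 1) = 2 + padicValNat 2 k) ∧
      (a % 4 = 3 → padicValNat 2 (a * m - 1) ≥ 3 + padicValNat 2 k) := by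
  open Aux19 in
  -- Step 1: parity, m is odd
  have hterm2 : ∀ j, (2*j+1)^k % 2 = 1 := by
    intro j
    rw [Nat.pow_mod, Nat.mul_add_mod]
    simp
  have hT2 : T k m % 2 = m % 2 := by
    unfold T
    rw [Finset.sum_nat_mod, Finset.sum_congr rfl (fun j _ => hterm2 j)]
    simp
  have hRo : (2*m+1)^k % 2 = 1 := hterm2 m
  have haT : (a * T k m) % 2 = 1 := by rw [h]; exact hRo
  have hTa2 : a % 2 = 1 ∧ T k m % 2 = 1 := by
    rw [Nat.mul_mod] at haT
    constructor
    · by_contra hc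
      have h0 : a % 2 = 0 := by omega
      rw [h0] at haT; simp at haT
    · by_contra hc
      have h0 : T k m % 2 = 0 := by omega
      rw [h0] at haT; simp at haT
  have hm2 : m % 2 = 1 := by omega
  -- Step 2: k is even
  have hk2 : k % 2 = 0 := by
    by_contra hk2
    have hk1 : k % 2 = 1 := by omega
    set p := m.minFac with hpdef
    have hp : p.Prime := Nat.minFac_prime (by omega)
    haveI : Fact p.Prime := ⟨hp⟩
    have hpm : p ∣ m := Nat.minFac_dvd m
    have hp2 : p ≠ 2 := by
      intro h2
      obtain ⟨c, hc⟩ := hpm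
      rw [h2] at hc
      omega
    obtain ⟨t, ht⟩ := hpm
    have hTp : ((T k m : ℕ) : ZMod p) = 0 := by
      unfold T
      push_cast
      have hsplit : ∑ j ∈ Finset.range m, ((2*(j:ZMod p)+1))^k
          = t • ∑ j ∈ Finset.range p, ((2*(j:ZMod p)+1))^k := by
        rw [ht]
        exact Aux19.sum_chunk p (fun x => (2*x+1)^k) t
      rw [hsplit, Aux19.sum_range_to_univ p (fun x => (2*x+1)^k),
        Aux19.zmod_sum_affine p hp2 k, Aux19.zmod_sum_pow_eq_zero p hp2 k hk1]
      simp
    rw [ZMod.natCast_eq_zero_iff] at hTp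
    have hpN : p ∣ (2*m+1)^k := h ▸ hTp.mul_left a
    have hpN' : p ∣ 2*m+1 := hp.dvd_of_dvd_pow hpN
    have h21 : 2*m+1 - 2*m = 1 := by omega
    have h1 : p ∣ 1 := h21 ▸ Nat.dvd_sub hpN' (Dvd.dvd.mul_left (Nat.minFac_dvd m) 2)
    have := hp.two_le
    have := Nat.dvd_one.mp h1
    omega
  -- Step 3: extract the 2-adic valuation of k
  obtain ⟨v, u, hu, hkvu⟩ := Nat.exists_eq_two_pow_mul_odd (by omega : k ≠ 0)
  have hu2 : u % 2 = 1 := Nat.odd_iff.mp hu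
  obtain ⟨w, rfl⟩ : ∃ w, v = w + 1 := by
    rcases v with _ | w
    · exfalso
      rw [pow_zero, one_mul] at hkvu
      omega
    · exact ⟨w, rfl⟩
  have hu0 : u ≠ 0 := by omega
  have hvk : padicValNat 2 k = w + 1 := by
    rw [hkvu, padicValNat.mul (pow_ne_zero _ two_ne_zero) hu0, padicValNat.prime_pow,
      padicValNat.eq_zero_of_not_dvd (by omega), add_zero]
  -- Step 4: the congruence a*m ≡ 1 + 2^(w+3)*delta m  (mod 2^(w+4))
  set M := 2^(w+4) with hMdef
  haveI : NeZero M := ⟨pow_ne_zero _ two_ne_zero⟩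
  have hM0 : ((2:ZMod M))^(w+4) = 0 := by
    have h0 := ZMod.natCast_self M
    rw [hMdef] at h0
    push_cast at h0
    exact h0
  have hKey : ∀ j, (((2*j+1)^k : ℕ) : ZMod M) = 1 + 2^(w+3) * ((Aux19.delta j : ℕ) : ZMod M) := by
    intro j
    obtain ⟨d, hd, hd2⟩ := Aux19.key w u j hu2
    rw [← hkvu] at hd
    have hdd : d = 2*(d/2) + Aux19.delta j := by unfold Aux19.delta; omega
    have hsplit : (2*j+1)^k = 1 + 2^(w+3)*(Aux19.delta j) + 2^(w+4)*(d/2) := by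
      rw [hd]
      conv_lhs => rw [hdd]
      ring
    rw [hsplit]
    push_cast
    rw [hM0]
    ring
  have hS := Aux19.sum_delta_even m hm2
  have hT : ((T k m : ℕ) : ZMod M) = (m : ZMod M) := by
    rw [show T k m = ∑ j ∈ Finset.range m, (2*j+1)^k from rfl, Nat.cast_sum]
    rw [Finset.sum_congr rfl (fun j _ => hKey j)]
    rw [Finset.sum_add_distrib, Finset.sum_const, Finset.card_range, ← Finset.mul_sum,
      ← Nat.cast_sum]
    obtain ⟨S2, hS2⟩ : ∃ s2, (∑ j ∈ Finset.range m, Aux19.delta j) = 2*s2 := ⟨(∑ j ∈ Finset.range m, Aux19.delta j)/2, by omega⟩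
    rw [hS2]
    push_cast
    rw [show ((2:ZMod M))^(w+3)*(2*(S2:ZMod M)) = (2:ZMod M)^(w+4)*S2 from by ring, hM0]
    simp
  have hcast : ((a * m : ℕ) : ZMod M) = ((1 + 2^(w+3) * Aux19.delta m : ℕ) : ZMod M) := by
    have h1 : ((a * m : ℕ) : ZMod M) = (a : ZMod M) * ((m : ℕ) : ZMod M) := by push_cast; ring
    have h2 : ((a * T k m : ℕ) : ZMod M) = (a : ZMod M) * ((T k m : ℕ) : ZMod M) := by
      push_cast; ring
    have h3 := congrArg (fun n : ℕ => (n : ZMod M)) h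
    rw [h1, ← hT, ← h2, h3, hKey m]
    push_cast
    ring
  have hmod : (a*m) % M = (1 + 2^(w+3) * Aux19.delta m) % M :=
    (ZMod.natCast_eq_natCast_iff' _ _ _).mp hcast
  have hP8 : 8 ≤ 2^(w+3) := by
    calc (8:ℕ) = 2^3 := by norm_num
    _ ≤ 2^(w+3) := Nat.pow_le_pow_right (by norm_num) (by omega)
  have hM2 : M = 2*2^(w+3) := by rw [hMdef]; ring
  have hQ := Nat.div_add_mod (a*m) M
  have hma : m ≤ a*m := Nat.le_mul_of_pos_left m ha
  -- Step 5: case split on m % 4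
  obtain hm4 | hm4 : m % 4 = 1 ∨ m % 4 = 3 := by omega
  · -- m ≡ 1 (mod 4): a ≡ 1 (mod 4) and the valuation is exactly w+3
    have hdm : Aux19.delta m = 1 := by rw [Aux19.delta_eq, if_pos (by omega)]
    rw [hdm, mul_one] at hmod
    rw [Nat.mod_eq_of_lt (by omega : 1 + 2^(w+3) < M)] at hmod
    set Q := (a*m) / M with hQdef
    have e1 : 2^(w+3)*(2*Q+1) = M*Q + 2^(w+3) := by rw [hM2]; ring
    have ham1 : a*m - 1 = 2^(w+3)*(2*Q+1) := by omega
    have e2 : 2^(w+3)*(2*Q+1) = 4*(2^(w+1)*(2*Q+1)) := by ring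
    have h4 : (a*m) % 4 = 1 := by omega
    have hmm4 := Nat.mul_mod a m 4
    rw [hm4] at hmm4
    have ha4 : a % 4 = 1 := by omega
    have hval : padicValNat 2 (a*m-1) = w + 3 := by
      rw [ham1, padicValNat.mul (pow_ne_zero _ two_ne_zero) (by omega),
        padicValNat.prime_pow, padicValNat.eq_zero_of_not_dvd (by omega), add_zero]
    constructor
    · intro _
      rw [hval, hvk]
      omega
    · intro h3
      omega
  · -- m ≡ 3 (mod 4): a ≡ 3 (mod 4) and the valuation is at least w+4
    have hdm : Aux19.delta m = 0 := by rw [Aux19.delta_eq, if_neg (by omega)]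
    rw [hdm, mul_zero, add_zero] at hmod
    rw [Nat.mod_eq_of_lt (by omega : 1 < M)] at hmod
    set Q := (a*m) / M with hQdef
    have ham1 : a*m - 1 = M*Q := by omega
    have ham0 : a*m - 1 ≠ 0 := by omega
    have hdvd : 2^(w+4) ∣ a*m - 1 := by
      rw [← hMdef, ham1]
      exact Dvd.intro Q rfl
    have hge : w + 4 ≤ padicValNat 2 (a*m-1) := (padicValNat_dvd_iff_le ham0).mp hdvd
    have e2 : M*Q = 4*(2^(w+2)*Q) := by rw [hM2]; ring
    have h4 : (a*m) % 4 = 1 := by omega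
    have hmm4 := Nat.mul_mod a m 4
    rw [hm4] at hmm4
    have ha4 : a % 4 = 3 := by omega
    constructor
    · intro h1
      omega
    · intro _
      rw [hvk]
      omega
end
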